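/- arXiv:2210.16664 — 3 statements merged into one kernel-verified Lean document; each statement's English description precedes it below -/
import Mathlib

section
/- Let ‖·‖ be a (κ,ς)-regular norm on ℝⁿ and P : ℝⁿ → ℝᵖ a surjective linear map. Then the factor-norm ‖u‖' = min{‖x‖ : Px = u} on ℝᵖ is (κ,ς)-regular. -/
open scoped RealInnerProductSpace
open Real Matrix

/-- `N` is a norm on the real vector space `E`. -/
def IsNorm {E : Type*} [AddCommGroup E] [Module ℝ E] (N : E → ℝ) : Prop :=
  (∀ x, 0 ≤ N x) ∧ (∀ x, N x = 0 ↔ x = 0) ∧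
    (∀ (c : ℝ) (x), N (c • x) = |c| * N x) ∧ ∀ x y, N (x + y) ≤ N x + N y

/-- The conjugate (dual) norm of `N`: `‖y‖_* = sup {⟨y,x⟩ : N x ≤ 1}`. -/
noncomputable def dualNorm {E : Type*} [NormedAddCommGroup E] [InnerProductSpace ℝ E]
    (N : E → ℝ) (y : E) : ℝ :=
  sSup {r | ∃ x, N x ≤ 1 ∧ r = ⟪y, x⟫}

/-- `N` is a `κ`-smooth norm: its square `Φ` is `C¹` and satisfies
`Φ(x+h) ≤ Φ(x) + ⟨∇Φ(x),h⟩ + κ Φ(h)`. -/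
def IsSmoothNorm {E : Type*} [NormedAddCommGroup E] [InnerProductSpace ℝ E] [CompleteSpace E]
    (κ : ℝ) (N : E → ℝ) : Prop :=
  IsNorm N ∧ ContDiff ℝ 1 (fun x => N x ^ 2) ∧
    ∀ x h, N (x + h) ^ 2 ≤
      N x ^ 2 + ⟪gradient (fun z => N z ^ 2) x, h⟫ + κ * N h ^ 2

/-- `N` is a `(κ,ς)`-regular norm: within factor `ς` of a `κ`-smooth norm. -/
def IsRegularNorm {E : Type*} [NormedAddCommGroup E] [InnerProductSpace ℝ E] [CompleteSpace E]
    (κ ς : ℝ) (N : E → ℝ) : Prop :=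
  ∃ M : E → ℝ, IsSmoothNorm κ M ∧ ∀ x, ς⁻¹ * M x ≤ N x ∧ N x ≤ ς * M x

namespace Stmt10Aux

variable {m : ℕ}

lemma abs_coord_le (x : EuclideanSpace ℝ (Fin m)) (i : Fin m) : |x i| ≤ ‖x‖ := by
  have h := abs_real_inner_le_norm (EuclideanSpace.single i (1:ℝ)) x
  simpa [EuclideanSpace.norm_single, EuclideanSpace.inner_single_left] using h

lemma isNorm_zero {N : EuclideanSpace ℝ (Fin m) → ℝ} (hN : IsNorm N) : N 0 = 0 :=
  (hN.2.1 0).mpr rfl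

lemma isNorm_upper {N : EuclideanSpace ℝ (Fin m) → ℝ} (hN : IsNorm N) :
    ∃ C : ℝ, 0 < C ∧ ∀ x, N x ≤ C * ‖x‖ := by
  refine ⟨(∑ i, N (EuclideanSpace.single i (1:ℝ))) + 1, by
    have : (0:ℝ) ≤ ∑ i, N (EuclideanSpace.single i (1:ℝ)) := Finset.sum_nonneg fun i _ => hN.1 _
    linarith, fun x => ?_⟩
  obtain ⟨h0, heq, hsmul, hadd⟩ := hN
  have hx : x = ∑ i, EuclideanSpace.single i (x i) := by
    ext j; rw [WithLp.ofLp_sum, Finset.sum_apply]; simp [EuclideanSpace.single_apply]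
  calc N x = N (∑ i, EuclideanSpace.single i (x i)) := by rw [← hx]
    _ ≤ ∑ i, N (EuclideanSpace.single i (x i)) := by
        exact Finset.le_sum_of_subadditive N ((heq 0).mpr rfl).le hadd _ _
    _ ≤ ∑ i, N (EuclideanSpace.single i (1:ℝ)) * ‖x‖ := by
        refine Finset.sum_le_sum fun i _ => ?_
        have h1 : EuclideanSpace.single i (x i) = (x i) • EuclideanSpace.single i (1:ℝ) := by
          ext j; simp [EuclideanSpace.single_apply]
        rw [h1, hsmul, mul_comm]
        exact mul_le_mul_of_nonneg_left (abs_coord_le x i) (h0 _)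
    _ = (∑ i, N (EuclideanSpace.single i (1:ℝ))) * ‖x‖ := by rw [← Finset.sum_mul]
    _ ≤ _ := by
        apply mul_le_mul_of_nonneg_right _ (norm_nonneg x)
        linarith

lemma isNorm_continuous {N : EuclideanSpace ℝ (Fin m) → ℝ} (hN : IsNorm N) : Continuous N := by
  obtain ⟨C, hC, hle⟩ := isNorm_upper hN
  obtain ⟨h0, heq, hsmul, hadd⟩ := hN
  apply (LipschitzWith.of_dist_le_mul (K := ⟨C, hC.le⟩) (f := N) ?_).continuous
  intro x y
  have hsym : N (x - y) = N (y - x) := by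
    have : y - x = (-1 : ℝ) • (x - y) := by module
    rw [this, hsmul]; norm_num
  have h1 : N x - N y ≤ N (x - y) := by
    have := hadd (x - y) y; simp at this; linarith
  have h2 : N y - N x ≤ N (x - y) := by
    have := hadd (y - x) x; simp at this; linarith [hsym]
  have : dist (N x) (N y) ≤ N (x - y) := by
    rw [Real.dist_eq]; rw [abs_le]; constructor <;> linarith
  refine this.trans ?_
  have := hle (x - y)
  rw [dist_eq_norm]; exact this

lemma isNorm_lower {N : EuclideanSpace ℝ (Fin m) → ℝ} (hN : IsNorm N) :
    ∃ c : ℝ, 0 < c ∧ ∀ x, c * ‖x‖ ≤ N x := by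
  rcases subsingleton_or_nontrivial (EuclideanSpace ℝ (Fin m)) with hs | hs
  · refine ⟨1, one_pos, fun x => ?_⟩
    have : x = 0 := Subsingleton.elim x 0
    simp [this, isNorm_zero hN]
  · have hsph : (Metric.sphere (0 : EuclideanSpace ℝ (Fin m)) 1).Nonempty :=
      NormedSpace.sphere_nonempty.mpr zero_le_one
    obtain ⟨x₀, hx₀mem, hx₀min⟩ :=
      (isCompact_sphere (0 : EuclideanSpace ℝ (Fin m)) 1).exists_isMinOn hsph
        (isNorm_continuous hN).continuousOn
    have hx₀ : ‖x₀‖ = 1 := by simpa using hx₀mem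
    have hpos : 0 < N x₀ := by
      rcases (hN.1 x₀).lt_or_eq with h | h
      · exact h
      · exfalso
        have : x₀ = 0 := (hN.2.1 x₀).mp h.symm
        rw [this] at hx₀; simp at hx₀
    refine ⟨N x₀, hpos, fun x => ?_⟩
    rcases eq_or_ne x 0 with rfl | hx
    · simp [isNorm_zero hN]
    · have hnx : (0:ℝ) < ‖x‖ := norm_pos_iff.mpr hx
      have hmem : ‖x‖⁻¹ • x ∈ Metric.sphere (0 : EuclideanSpace ℝ (Fin m)) 1 := by
        simp [norm_smul, abs_of_pos (inv_pos.mpr hnx), inv_mul_cancel₀ hnx.ne']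
      have h2 : N x₀ ≤ N (‖x‖⁻¹ • x) := hx₀min hmem
      rw [hN.2.2.1] at h2
      rw [abs_of_pos (inv_pos.mpr hnx)] at h2
      calc N x₀ * ‖x‖ ≤ (‖x‖⁻¹ * N x) * ‖x‖ := by
            exact mul_le_mul_of_nonneg_right h2 (norm_nonneg x)
        _ = N x := by field_simp

lemma exists_min_fiber {n q : ℕ} {N : EuclideanSpace ℝ (Fin n) → ℝ}
    {P : EuclideanSpace ℝ (Fin n) →ₗ[ℝ] EuclideanSpace ℝ (Fin q)}
    (hN : IsNorm N) (hP : Function.Surjective P) (u : EuclideanSpace ℝ (Fin q)) :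
    ∃ x, P x = u ∧ ∀ z, P z = u → N x ≤ N z := by
  have hC : Continuous N := isNorm_continuous hN
  obtain ⟨c, hcpos, hcle⟩ := isNorm_lower hN
  obtain ⟨x₀, hx₀⟩ := hP u
  have hPc : Continuous P := P.continuous_of_finiteDimensional
  set S : Set (EuclideanSpace ℝ (Fin n)) := {z | P z = u ∧ N z ≤ N x₀} with hS
  have hScl : IsClosed S := by
    apply IsClosed.inter
    · exact isClosed_eq hPc continuous_const
    · exact isClosed_le hC continuous_const
  have hSb : Bornology.IsBounded S := by
    apply Bornology.IsBounded.subset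
      (Metric.isBounded_closedBall (x := (0:EuclideanSpace ℝ (Fin n))) (r := N x₀ / c))
    intro z hz
    rw [Metric.mem_closedBall, dist_zero_right]
    have := hcle z
    have := hz.2
    rw [div_eq_inv_mul, ← mul_le_mul_iff_right₀ hcpos, ← mul_assoc, mul_inv_cancel₀ hcpos.ne', one_mul]
    linarith
  have hScomp : IsCompact S := Metric.isCompact_of_isClosed_isBounded hScl hSb
  have hSne : S.Nonempty := ⟨x₀, hx₀, le_refl _⟩
  obtain ⟨x, hxS, hxmin⟩ := hScomp.exists_isMinOn hSne hC.continuousOn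
  refine ⟨x, hxS.1, fun z hz => ?_⟩
  by_cases h : N z ≤ N x₀
  · exact hxmin ⟨hz, h⟩
  · exact le_trans (hxmin ⟨hx₀, le_refl _⟩) (le_of_not_ge h)

open InnerProductSpace in
lemma grad_ineq {n : ℕ} {Φ : EuclideanSpace ℝ (Fin n) → ℝ} (hconv : ConvexOn ℝ Set.univ Φ)
    (hdiff : Differentiable ℝ Φ) (x z : EuclideanSpace ℝ (Fin n)) :
    Φ x + ⟪gradient Φ x, z - x⟫ ≤ Φ z := by
  set G := gradient Φ x with hGdef
  have hG : HasGradientAt Φ G x := (hdiff x).hasGradientAt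
  have hF : HasFDerivAt Φ (toDual ℝ _ G) x := hasGradientAt_iff_hasFDerivAt.mp hG
  set γ : ℝ → EuclideanSpace ℝ (Fin n) := fun t => x + t • (z - x) with hγdef
  have hγd : HasDerivAt γ (z - x) 0 := by
    have h1 : HasDerivAt (fun t : ℝ => t • (z - x)) ((1:ℝ) • (z - x)) 0 :=
      (hasDerivAt_id 0).smul_const (z - x)
    rw [one_smul] at h1
    exact h1.const_add x
  have hγ0 : γ 0 = x := by simp [hγdef]
  have hψ : HasDerivAt (Φ ∘ γ) (⟪G, z - x⟫) 0 := by
    rw [← hγ0] at hF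
    have := hF.comp_hasDerivAt 0 hγd
    simpa [InnerProductSpace.toDual_apply_apply] using this
  have hψconv : ConvexOn ℝ Set.univ (Φ ∘ γ) := by
    have h := hconv.comp_affineMap (AffineMap.lineMap x z)
    have : γ = ⇑(AffineMap.lineMap (k := ℝ) x z) := by
      funext t; rw [AffineMap.lineMap_apply_module]; show x + t • (z - x) = _; module
    rw [this]
    simpa using h
  have hsl := hψconv.le_slope_of_hasDerivAt (Set.mem_univ 0) (Set.mem_univ 1) one_pos hψ
  rw [slope_def_field] at hsl
  have h1 : (Φ ∘ γ) 1 = Φ z := by simp [hγdef]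
  have h0 : (Φ ∘ γ) 0 = Φ x := by simp [hγdef]
  rw [h1, h0, sub_zero, div_one] at hsl
  linarith

lemma grad_eq_of_min {n : ℕ} {Φ : EuclideanSpace ℝ (Fin n) → ℝ}
    (hconv : ConvexOn ℝ Set.univ Φ) (hdiff : Differentiable ℝ Φ)
    {L : ℝ} (hL : 0 < L)
    (hsm : ∀ a h, Φ (a + h) ≤ Φ a + ⟪gradient Φ a, h⟫ + L * ‖h‖^2)
    {x x' : EuclideanSpace ℝ (Fin n)} (hval : Φ x = Φ x')
    (hperp : ⟪gradient Φ x, x' - x⟫ = 0) :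
    gradient Φ x' = gradient Φ x := by
  set G := gradient Φ with hG
  set d : EuclideanSpace ℝ (Fin n) := G x' - G x with hd
  set z : EuclideanSpace ℝ (Fin n) := x' + (-(1/(2*L))) • d with hz
  have h1 : Φ x + ⟪G x, z - x⟫ ≤ Φ z := grad_ineq hconv hdiff x z
  have h2 : Φ z ≤ Φ x' + ⟪G x', (-(1/(2*L))) • d⟫ + L * ‖(-(1/(2*L))) • d‖^2 := hsm x' _
  have e1 : ⟪G x, z - x⟫ = -(1/(2*L)) * ⟪G x, d⟫ := by
    have : z - x = (x' - x) + (-(1/(2*L))) • d := by rw [hz]; abel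
    rw [this, inner_add_right, real_inner_smul_right, hperp]; ring
  have e2 : ⟪G x', (-(1/(2*L))) • d⟫ = -(1/(2*L)) * ⟪G x', d⟫ := real_inner_smul_right _ _ _
  have e3 : ‖(-(1/(2*L))) • d‖^2 = (1/(2*L))^2 * ‖d‖^2 := by
    rw [norm_smul]; simp [mul_pow]
  have e4 : ⟪G x', d⟫ - ⟪G x, d⟫ = ‖d‖^2 := by
    rw [← inner_sub_left, ← hd, real_inner_self_eq_norm_sq]
  obtain ⟨c, hc⟩ : ∃ c : ℝ, c = 1/(2*L) := ⟨_, rfl⟩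
  have hcpos : 0 < c := by rw [hc]; positivity
  have hLc : L * c = 1/2 := by rw [hc]; field_simp
  rw [e1] at h1
  rw [e2, e3] at h2
  rw [← hc] at h1 h2
  set a := ⟪G x, d⟫ with ha
  set b := ⟪G x', d⟫ with hb
  set s := ‖d‖^2 with hs
  have m1 : c * b - c * a = c * s := by rw [← e4]; ring
  have m2 : L * (c^2 * s) = (1/2) * (c * s) := by
    calc L * (c^2 * s) = (L * c) * (c * s) := by ring
      _ = (1/2) * (c * s) := by rw [hLc]
  have m3 : c * s ≤ 0 := by linarith [h1, h2, hval, m1, m2]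
  have hd0 : s ≤ 0 := by nlinarith [hcpos, m3]
  have hs0 : (0:ℝ) ≤ s := by rw [hs]; positivity
  have hseq : ‖d‖^2 = 0 := by rw [← hs]; linarith
  have : d = 0 := by
    have h := pow_eq_zero_iff (n := 2) (by norm_num) |>.mp hseq
    exact norm_eq_zero.mp h
  exact sub_eq_zero.mp this

end Stmt10Aux

namespace Stmt10Aux

noncomputable def factorNorm {n q : ℕ} (M : EuclideanSpace ℝ (Fin n) → ℝ)
    (P : EuclideanSpace ℝ (Fin n) →ₗ[ℝ] EuclideanSpace ℝ (Fin q)) :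
    EuclideanSpace ℝ (Fin q) → ℝ :=
  fun u => sInf {r | ∃ x, P x = u ∧ r = M x}

variable {n q : ℕ} {M : EuclideanSpace ℝ (Fin n) → ℝ}
  {P : EuclideanSpace ℝ (Fin n) →ₗ[ℝ] EuclideanSpace ℝ (Fin q)}

lemma factorNorm_bddBelow (hM : IsNorm M) (u : EuclideanSpace ℝ (Fin q)) :
    BddBelow {r | ∃ x, P x = u ∧ r = M x} :=
  ⟨0, fun r ⟨x, _, hr⟩ => hr ▸ hM.1 x⟩

lemma factorNorm_le (hM : IsNorm M) {u : EuclideanSpace ℝ (Fin q)}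
    {x : EuclideanSpace ℝ (Fin n)} (hx : P x = u) : factorNorm M P u ≤ M x :=
  csInf_le (factorNorm_bddBelow hM u) ⟨x, hx, rfl⟩

lemma factorNorm_exists_min (hM : IsNorm M) (hP : Function.Surjective P)
    (u : EuclideanSpace ℝ (Fin q)) :
    ∃ x, P x = u ∧ factorNorm M P u = M x ∧ ∀ z, P z = u → M x ≤ M z := by
  obtain ⟨x, hx, hmin⟩ := exists_min_fiber hM hP u
  refine ⟨x, hx, ?_, hmin⟩
  refine le_antisymm (factorNorm_le hM hx) ?_
  refine le_csInf ⟨M x, x, hx, rfl⟩ ?_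
  rintro r ⟨z, hz, rfl⟩
  exact hmin z hz

lemma factorNorm_nonneg (hM : IsNorm M) (hP : Function.Surjective P)
    (u : EuclideanSpace ℝ (Fin q)) : 0 ≤ factorNorm M P u := by
  obtain ⟨x, _, heq, _⟩ := factorNorm_exists_min hM hP u
  rw [heq]; exact hM.1 x

lemma isNorm_factorNorm (hM : IsNorm M) (hP : Function.Surjective P) :
    IsNorm (factorNorm M P) := by
  refine ⟨factorNorm_nonneg hM hP, fun u => ?_, fun t u => ?_, fun u v => ?_⟩
  · constructor
    · intro h
      obtain ⟨x, hx, heq, _⟩ := factorNorm_exists_min hM hP u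
      rw [heq] at h
      have : x = 0 := (hM.2.1 x).mp h
      rw [← hx, this, map_zero]
    · rintro rfl
      refine le_antisymm ?_ (factorNorm_nonneg hM hP 0)
      have h := factorNorm_le hM (u := 0) (x := 0) (map_zero P)
      rwa [isNorm_zero hM] at h
  · rcases eq_or_ne t 0 with rfl | ht
    · simp only [zero_smul, abs_zero, zero_mul]
      refine le_antisymm ?_ (factorNorm_nonneg hM hP 0)
      have h := factorNorm_le hM (u := 0) (x := 0) (map_zero P)
      rwa [isNorm_zero hM] at h
    · obtain ⟨x, hx, heq, _⟩ := factorNorm_exists_min hM hP u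
      obtain ⟨w, hw, hweq, _⟩ := factorNorm_exists_min hM hP (t • u)
      refine le_antisymm ?_ ?_
      · have hPt : P (t • x) = t • u := by rw [_root_.map_smul, hx]
        calc factorNorm M P (t • u) ≤ M (t • x) := factorNorm_le hM hPt
          _ = |t| * M x := hM.2.2.1 t x
          _ = |t| * factorNorm M P u := by rw [heq]
      · have hPt : P (t⁻¹ • w) = u := by
          rw [_root_.map_smul, hw, smul_smul, inv_mul_cancel₀ ht, one_smul]
        have h1 : factorNorm M P u ≤ M (t⁻¹ • w) := factorNorm_le hM hPt
        rw [hM.2.2.1] at h1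
        have h2 : |t| * factorNorm M P u ≤ |t| * (|t⁻¹| * M w) :=
          mul_le_mul_of_nonneg_left h1 (abs_nonneg t)
        rw [← mul_assoc, abs_inv, mul_inv_cancel₀ (abs_ne_zero.mpr ht), one_mul] at h2
        rwa [hweq]
  · obtain ⟨x, hx, hxeq, _⟩ := factorNorm_exists_min hM hP u
    obtain ⟨w, hw, hweq, _⟩ := factorNorm_exists_min hM hP v
    have hPa : P (x + w) = u + v := by rw [map_add, hx, hw]
    calc factorNorm M P (u + v) ≤ M (x + w) := factorNorm_le hM hPa
      _ ≤ M x + M w := hM.2.2.2 x w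
      _ = _ := by rw [hxeq, hweq]

end Stmt10Aux

namespace Stmt10Aux

set_option maxHeartbeats 2000000 in
open InnerProductSpace in
lemma isSmoothNorm_factorNorm {n q : ℕ} {κ : ℝ} (hκ : 1 ≤ κ)
    {M : EuclideanSpace ℝ (Fin n) → ℝ} (hM : IsSmoothNorm κ M)
    (P : EuclideanSpace ℝ (Fin n) →ₗ[ℝ] EuclideanSpace ℝ (Fin q))
    (hP : Function.Surjective P) :
    IsSmoothNorm κ (factorNorm M P) := by
  obtain ⟨hMn, hMC1, hMineq⟩ := hM
  set Φ : EuclideanSpace ℝ (Fin n) → ℝ := fun z => M z ^ 2 with hΦdef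
  have hΦdiff : Differentiable ℝ Φ := hMC1.differentiable one_ne_zero
  set G : EuclideanSpace ℝ (Fin n) → EuclideanSpace ℝ (Fin n) := fun x => gradient Φ x with hGdef
  obtain ⟨C, hCpos, hCle⟩ := isNorm_upper hMn
  obtain ⟨c, hcpos, hcle⟩ := isNorm_lower hMn
  have hκ0 : (0:ℝ) < κ := lt_of_lt_of_le one_pos hκ
  -- minimizers
  have hmin := fun u => exists_min_fiber hMn hP u
  choose xm hxmP hxmmin using hmin
  set M' : EuclideanSpace ℝ (Fin q) → ℝ := factorNorm M P with hM'def
  have hM'norm : IsNorm M' := isNorm_factorNorm hMn hP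
  have hM'eq : ∀ u, M' u = M (xm u) := by
    intro u
    refine le_antisymm (factorNorm_le hMn (hxmP u)) ?_
    refine le_csInf ⟨M (xm u), xm u, hxmP u, rfl⟩ ?_
    rintro r ⟨z, hz, rfl⟩
    exact hxmmin u z hz
  set Φ' : EuclideanSpace ℝ (Fin q) → ℝ := fun u => M' u ^ 2 with hΦ'def
  have hΦ'eq : ∀ u, Φ' u = Φ (xm u) := fun u => by rw [hΦ'def]; simp only; rw [hM'eq u]
  have hΦ'le : ∀ u x, P x = u → Φ' u ≤ Φ x := by
    intro u x hx
    exact pow_le_pow_left₀ (hM'norm.1 u) (factorNorm_le hMn hx) 2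
  -- perpendicularity of gradient at minimizers
  have hperp : ∀ u k, P k = 0 → ⟪G (xm u), k⟫ = 0 := by
    intro u k hk
    have key : ∀ t : ℝ, 0 ≤ t * ⟪G (xm u), k⟫ + κ * (t^2 * Φ k) := by
      intro t
      have hPt : P (xm u + t • k) = u := by
        rw [map_add, _root_.map_smul, hk, smul_zero, add_zero, hxmP]
      have hmle : Φ (xm u) ≤ Φ (xm u + t • k) :=
        pow_le_pow_left₀ (hMn.1 _) (hxmmin u _ hPt) 2
      have hup := hMineq (xm u) (t • k)
      have hsq : M (t • k) ^ 2 = t^2 * Φ k := by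
        rw [hMn.2.2.1, mul_pow, sq_abs]
      rw [hsq] at hup
      have hin : ⟪gradient (fun z => M z ^ 2) (xm u), t • k⟫ = t * ⟪G (xm u), k⟫ :=
        real_inner_smul_right _ _ _
      rw [hin] at hup
      have : Φ (xm u) ≤ Φ (xm u) + t * ⟪G (xm u), k⟫ + κ * (t^2 * Φ k) := le_trans hmle hup
      linarith
    set a := ⟪G (xm u), k⟫ with ha
    set b := κ * Φ k with hb
    have hbnn : 0 ≤ b := mul_nonneg hκ0.le (sq_nonneg _)
    have hb1 : (0:ℝ) < b + 1 := by linarith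
    have hkey2 := key (-(a/(b+1)))
    have hexp : (-(a/(b+1))) * a + κ * ((-(a/(b+1)))^2 * Φ k) = -(a^2/(b+1)^2) := by
      have : κ * ((-(a/(b+1)))^2 * Φ k) = (a/(b+1))^2 * b := by rw [hb]; ring
      rw [this]
      field_simp
      ring
    rw [hexp] at hkey2
    have h3 : a^2/(b+1)^2 ≤ 0 := by linarith
    have h4 : a^2 ≤ 0 := by
      have h5 := mul_le_mul_of_nonneg_right h3 (sq_nonneg (b+1))
      rw [div_mul_cancel₀, zero_mul] at h5
      · exact h5
      · positivity
    have : a^2 = 0 := le_antisymm h4 (sq_nonneg a)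
    exact pow_eq_zero_iff (n := 2) (by norm_num) |>.mp this
  -- convexity of Φ
  have hMconv : ConvexOn ℝ Set.univ M := by
    refine ⟨convex_univ, fun x _ z _ s t hs ht hst => ?_⟩
    calc M (s • x + t • z) ≤ M (s • x) + M (t • z) := hMn.2.2.2 _ _
      _ = |s| * M x + |t| * M z := by rw [hMn.2.2.1, hMn.2.2.1]
      _ = s * M x + t * M z := by rw [abs_of_nonneg hs, abs_of_nonneg ht]
  have hΦconv : ConvexOn ℝ Set.univ Φ := by
    refine ⟨convex_univ, fun x _ z _ s t hs ht hst => ?_⟩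
    have h1 : M (s • x + t • z) ≤ s * M x + t * M z := by
      have := hMconv.2 (Set.mem_univ x) (Set.mem_univ z) hs ht hst
      simpa [smul_eq_mul] using this
    have h2 : M (s • x + t • z)^2 ≤ (s * M x + t * M z)^2 :=
      pow_le_pow_left₀ (hMn.1 _) h1 2
    have h3 : (s * M x + t * M z)^2 ≤ s * M x ^2 + t * M z ^2 := by
      nlinarith [mul_nonneg (mul_nonneg hs ht) (sq_nonneg (M x - M z)), hst]
    simp only [smul_eq_mul, hΦdef]
    linarith
  -- Euclidean smoothness of Φ
  set L : ℝ := κ * C^2 with hLdef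
  have hLpos : 0 < L := by positivity
  have hsmE : ∀ a h, Φ (a + h) ≤ Φ a + ⟪gradient Φ a, h⟫ + L * ‖h‖^2 := by
    intro x h
    have h1 := hMineq x h
    have h2 : κ * M h ^ 2 ≤ L * ‖h‖^2 := by
      have ha : M h ^ 2 ≤ (C * ‖h‖)^2 := pow_le_pow_left₀ (hMn.1 h) (hCle h) 2
      have hb : (C * ‖h‖)^2 = C^2 * ‖h‖^2 := by ring
      rw [hLdef]
      calc κ * M h ^ 2 ≤ κ * (C^2 * ‖h‖^2) := by
            rw [← hb]; exact mul_le_mul_of_nonneg_left ha hκ0.le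
        _ = κ * C^2 * ‖h‖^2 := by ring
    calc Φ (x + h) ≤ Φ x + ⟪gradient Φ x, h⟫ + κ * M h ^ 2 := h1
      _ ≤ Φ x + ⟪gradient Φ x, h⟫ + L * ‖h‖^2 := by linarith
  -- right inverse and dual vector
  obtain ⟨Q, hQ⟩ := P.exists_rightInverse_of_surjective (LinearMap.range_eq_top.2 hP)
  have hQv : ∀ v, P (Q v) = v := by
    intro v
    have := congrArg (fun f => f v) hQ
    simpa using this
  set y : EuclideanSpace ℝ (Fin q) → EuclideanSpace ℝ (Fin q) :=
    fun u => (LinearMap.adjoint Q) (G (xm u)) with hydef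
  have hyinner : ∀ u v (h : EuclideanSpace ℝ (Fin n)), P h = v → ⟪y u, v⟫ = ⟪G (xm u), h⟫ := by
    intro u v h hh
    rw [hydef]
    simp only
    rw [LinearMap.adjoint_inner_left]
    have hker : P (Q v - h) = 0 := by rw [map_sub, hQv, hh, sub_self]
    have := hperp u (Q v - h) hker
    rw [inner_sub_right] at this
    linarith
  -- key inequality
  have hkey : ∀ u v, Φ' (u + v) ≤ Φ' u + ⟪y u, v⟫ + κ * Φ' v := by
    intro u v
    have hPsum : P (xm u + xm v) = u + v := by rw [map_add, hxmP, hxmP]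
    have h1 : Φ' (u + v) ≤ Φ (xm u + xm v) := hΦ'le _ _ hPsum
    have h2 := hMineq (xm u) (xm v)
    rw [hyinner u v (xm v) (hxmP v), hΦ'eq u, hΦ'eq v]
    exact le_trans h1 h2
  -- quadratic upper bound for Φ'
  set Qc := LinearMap.toContinuousLinearMap Q with hQcdef
  set B : ℝ := (C * ‖Qc‖)^2 with hBdef
  have hBnn : 0 ≤ B := sq_nonneg _
  have hΦ'bound : ∀ v, Φ' v ≤ B * ‖v‖^2 := by
    intro v
    have h1 : Φ' v ≤ Φ (Q v) := hΦ'le v (Q v) (hQv v)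
    have h2 : M (Q v) ≤ C * (‖Qc‖ * ‖v‖) := by
      refine le_trans (hCle (Q v)) ?_
      have : ‖Q v‖ ≤ ‖Qc‖ * ‖v‖ := Qc.le_opNorm v
      exact mul_le_mul_of_nonneg_left this hCpos.le
    have h3 : Φ (Q v) ≤ B * ‖v‖^2 := by
      have ha : M (Q v) ^ 2 ≤ (C * (‖Qc‖ * ‖v‖))^2 := pow_le_pow_left₀ (hMn.1 _) h2 2
      have hb : (C * (‖Qc‖ * ‖v‖))^2 = B * ‖v‖^2 := by rw [hBdef]; ring
      rw [← hb]
      exact ha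
    exact le_trans h1 h3
  -- continuity facts
  have hGcont : Continuous G := by
    have hfd : Continuous (fun x => fderiv ℝ Φ x) := hMC1.continuous_fderiv one_ne_zero
    have hGeq : G = fun x => (toDual ℝ (EuclideanSpace ℝ (Fin n))).symm (fderiv ℝ Φ x) := rfl
    rw [hGeq]
    exact (LinearIsometryEquiv.continuous _).comp hfd
  have hM'cont : Continuous M' := isNorm_continuous hM'norm
  have hΦ'cont : Continuous Φ' := by rw [hΦ'def]; exact hM'cont.pow 2
  have hΦcont : Continuous Φ := (isNorm_continuous hMn).pow 2
  have hPcont : Continuous P := P.continuous_of_finiteDimensional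
  -- equal gradients for any two minimizers over the same fiber
  have hGmin_eq : ∀ u (x : EuclideanSpace ℝ (Fin n)), P x = u → M x = M' u →
      G x = G (xm u) := by
    intro u x hx hMx
    have hval : Φ (xm u) = Φ x := by
      have h1 : Φ (xm u) = Φ' u := (hΦ'eq u).symm
      have h2 : Φ x = Φ' u := by
        show M x ^ 2 = M' u ^ 2
        rw [hMx]
      rw [h1, h2]
    have hp : ⟪gradient Φ (xm u), x - xm u⟫ = 0 := by
      have hk : P (x - xm u) = 0 := by rw [map_sub, hx, hxmP, sub_self]
      exact hperp u _ hk
    exact grad_eq_of_min hΦconv hΦdiff hLpos hsmE hval hp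
  -- continuity of u ↦ G (xm u)
  have hGxmcont : Continuous (fun u => G (xm u)) := by
    rw [continuous_iff_seqContinuous]
    intro uk p hup
    apply Filter.tendsto_of_subseq_tendsto
    intro ns hns
    obtain ⟨A, hA⟩ : ∃ A, ∀ k, M' (uk k) ≤ A := by
      obtain ⟨A, hA⟩ := ((hM'cont.tendsto p).comp hup).bddAbove_range
      exact ⟨A, fun k => hA ⟨k, rfl⟩⟩
    have hball : ∀ k, xm (uk k) ∈ Metric.closedBall (0 : EuclideanSpace ℝ (Fin n)) (A / c) := by
      intro k
      rw [Metric.mem_closedBall, dist_zero_right]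
      have h1 := hcle (xm (uk k))
      have h2 : M (xm (uk k)) = M' (uk k) := (hM'eq _).symm
      rw [le_div_iff₀ hcpos, mul_comm]
      calc c * ‖xm (uk k)‖ ≤ M (xm (uk k)) := h1
        _ = M' (uk k) := h2
        _ ≤ A := hA k
    obtain ⟨xb, hxbmem, φ, hφ, hφtend⟩ :=
      (isCompact_closedBall (0 : EuclideanSpace ℝ (Fin n)) (A / c)).tendsto_subseq
        (fun i => hball (ns i))
    refine ⟨φ, ?_⟩
    have htail : Filter.Tendsto (fun i => uk (ns (φ i))) Filter.atTop (nhds p) :=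
      hup.comp (hns.comp hφ.tendsto_atTop)
    have hPxb : P xb = p := by
      have h1 : Filter.Tendsto (fun i => P (xm (uk (ns (φ i))))) Filter.atTop (nhds (P xb)) :=
        (hPcont.tendsto xb).comp hφtend
      have h2 : (fun i => P (xm (uk (ns (φ i))))) = fun i => uk (ns (φ i)) :=
        funext fun i => hxmP _
      rw [h2] at h1
      exact tendsto_nhds_unique h1 htail
    have hMxb : M xb = M' p := by
      have h1 : Filter.Tendsto (fun i => Φ (xm (uk (ns (φ i))))) Filter.atTop (nhds (Φ xb)) :=
        (hΦcont.tendsto xb).comp hφtend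
      have h2 : (fun i => Φ (xm (uk (ns (φ i))))) = fun i => Φ' (uk (ns (φ i))) :=
        funext fun i => (hΦ'eq _).symm
      rw [h2] at h1
      have h3 : Filter.Tendsto (fun i => Φ' (uk (ns (φ i)))) Filter.atTop (nhds (Φ' p)) :=
        (hΦ'cont.tendsto p).comp htail
      have h4 : Φ xb = Φ' p := tendsto_nhds_unique h1 h3
      simp only [hΦdef, hΦ'def] at h4
      nlinarith [hMn.1 xb, hM'norm.1 p, h4]
    have hGeq2 : G xb = G (xm p) := hGmin_eq p xb hPxb hMxb
    have hfin : Filter.Tendsto (fun i => G (xm (uk (ns (φ i))))) Filter.atTop (nhds (G xb)) :=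
      (hGcont.tendsto xb).comp hφtend
    rw [hGeq2] at hfin
    exact hfin
  have hycont : Continuous y := by
    rw [hydef]
    exact (LinearMap.adjoint Q).continuous_of_finiteDimensional.comp hGxmcont
  -- negation invariance
  have hM'neg : ∀ v, M' (-v) = M' v := by
    intro v
    have h := hM'norm.2.2.1 (-1) v
    simpa using h
  have hΦ'neg : ∀ v, Φ' (-v) = Φ' v := by
    intro v
    show M' (-v) ^ 2 = M' v ^ 2
    rw [hM'neg]
  -- differentiability with gradient y
  have hκB : 0 ≤ κ * B := mul_nonneg hκ0.le hBnn
  have hgrad : ∀ u, HasGradientAt Φ' (y u) u := by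
    intro u
    rw [hasGradientAt_iff_isLittleO, Asymptotics.isLittleO_iff]
    intro ε hε
    set δ := ε / (2 * (κ * B + 1)) with hδ
    have hδpos : 0 < δ := by rw [hδ]; positivity
    have hδle : κ * B * δ ≤ ε / 2 := by
      have hne : κ * B + 1 ≠ 0 := by positivity
      have h' : (κ * B + 1) * δ = ε / 2 := by
        rw [hδ]
        field_simp
      have h'' : κ * B * δ ≤ (κ * B + 1) * δ :=
        mul_le_mul_of_nonneg_right (by linarith) hδpos.le
      linarith
    have h1 : ∀ᶠ x' in nhds u, ‖y x' - y u‖ < ε / 2 := by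
      have := Metric.tendsto_nhds.mp (hycont.tendsto u) (ε / 2) (by linarith)
      filter_upwards [this] with x' hx'
      rwa [dist_eq_norm] at hx'
    have h2 : ∀ᶠ x' in nhds u, ‖x' - u‖ < δ := by
      filter_upwards [Metric.ball_mem_nhds u hδpos] with x' hx'
      rwa [Metric.mem_ball, dist_eq_norm] at hx'
    filter_upwards [h1, h2] with x' e1 e2
    have hvnn : (0:ℝ) ≤ ‖x' - u‖ := norm_nonneg _
    have hx'uv : u + (x' - u) = x' := by abel
    have hub : Φ' x' - Φ' u - ⟪y u, x' - u⟫ ≤ κ * B * ‖x' - u‖^2 := by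
      have hk := hkey u (x' - u)
      rw [hx'uv] at hk
      have hbb : κ * Φ' (x' - u) ≤ κ * (B * ‖x' - u‖^2) :=
        mul_le_mul_of_nonneg_left (hΦ'bound _) hκ0.le
      have : κ * (B * ‖x' - u‖^2) = κ * B * ‖x' - u‖^2 := by ring
      linarith
    have hlb : -(‖y x' - y u‖ * ‖x' - u‖ + κ * B * ‖x' - u‖^2) ≤
        Φ' x' - Φ' u - ⟪y u, x' - u⟫ := by
      have hk2 := hkey x' (u - x')
      have hux : x' + (u - x') = u := by abel
      rw [hux] at hk2
      have huv : u - x' = -(x' - u) := by abel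
      rw [huv, hΦ'neg] at hk2
      have hinner : ⟪y x', -(x' - u)⟫ = -⟪y x', x' - u⟫ := by
        rw [inner_neg_right]
      rw [hinner] at hk2
      have hdiff2 : ⟪y x', x' - u⟫ - ⟪y u, x' - u⟫ = ⟪y x' - y u, x' - u⟫ :=
        (inner_sub_left _ _ _).symm
      have habs : |⟪y x' - y u, x' - u⟫| ≤ ‖y x' - y u‖ * ‖x' - u‖ :=
        abs_real_inner_le_norm _ _
      have habs' := (abs_le.mp habs).1
      have hbb : κ * Φ' (x' - u) ≤ κ * (B * ‖x' - u‖^2) :=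
        mul_le_mul_of_nonneg_left (hΦ'bound _) hκ0.le
      have hring : κ * (B * ‖x' - u‖^2) = κ * B * ‖x' - u‖^2 := by ring
      linarith
    have key1 : ‖y x' - y u‖ * ‖x' - u‖ ≤ (ε / 2) * ‖x' - u‖ :=
      mul_le_mul_of_nonneg_right e1.le hvnn
    have key2 : κ * B * ‖x' - u‖^2 ≤ (ε / 2) * ‖x' - u‖ := by
      calc κ * B * ‖x' - u‖^2 = (κ * B * ‖x' - u‖) * ‖x' - u‖ := by ring
        _ ≤ (κ * B * δ) * ‖x' - u‖ :=
            mul_le_mul_of_nonneg_right (mul_le_mul_of_nonneg_left e2.le hκB) hvnn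
        _ ≤ (ε / 2) * ‖x' - u‖ := mul_le_mul_of_nonneg_right hδle hvnn
    rw [Real.norm_eq_abs, abs_le]
    constructor
    · linarith
    · linarith
  have hdiff' : Differentiable ℝ Φ' := fun u => (hgrad u).differentiableAt
  have hfderiv : ∀ u, fderiv ℝ Φ' u = toDual ℝ _ (y u) := fun u =>
    (hasGradientAt_iff_hasFDerivAt.mp (hgrad u)).fderiv
  have hcd : ContDiff ℝ 1 Φ' := by
    rw [contDiff_one_iff_fderiv]
    refine ⟨hdiff', ?_⟩
    exact ((LinearIsometryEquiv.continuous (toDual ℝ (EuclideanSpace ℝ (Fin q)))).comp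
      hycont).congr (fun u => (hfderiv u).symm)
  have hgradeq : ∀ u, gradient Φ' u = y u := fun u => (hgrad u).gradient
  have hfinal : ∀ u v, Φ' (u + v) ≤ Φ' u + ⟪gradient Φ' u, v⟫ + κ * Φ' v := by
    intro u v
    rw [hgradeq]
    exact hkey u v
  exact ⟨hM'norm, hcd, hfinal⟩

end Stmt10Aux

/-- the factor-norm of a `(κ,ς)`-regular norm under a surjective
linear map is `(κ,ς)`-regular. -/
theorem stmt_10 {n p : ℕ} (κ ς : ℝ) (hκ : 1 ≤ κ) (hς : 1 ≤ ς)
    (N : EuclideanSpace ℝ (Fin n) → ℝ) (hN : IsNorm N)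
    (hreg : IsRegularNorm κ ς N)
    (P : EuclideanSpace ℝ (Fin n) →ₗ[ℝ] EuclideanSpace ℝ (Fin p))
    (hP : Function.Surjective P)
    (N' : EuclideanSpace ℝ (Fin p) → ℝ)
    (hN' : ∀ u, N' u = sInf {r | ∃ x, P x = u ∧ r = N x}) :
    IsRegularNorm κ ς N' := by
  obtain ⟨M, hMsmooth, hsand⟩ := hreg
  have hMn : IsNorm M := hMsmooth.1
  have hς0 : (0:ℝ) < ς := lt_of_lt_of_le one_pos hς
  refine ⟨Stmt10Aux.factorNorm M P, Stmt10Aux.isSmoothNorm_factorNorm hκ hMsmooth P hP,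
    fun u => ⟨?_, ?_⟩⟩
  · rw [hN' u]
    obtain ⟨x₀, hx₀⟩ := hP u
    refine le_csInf ⟨N x₀, x₀, hx₀, rfl⟩ ?_
    rintro r ⟨x, hx, rfl⟩
    have h1 : Stmt10Aux.factorNorm M P u ≤ M x := Stmt10Aux.factorNorm_le hMn hx
    have h2 : ς⁻¹ * M x ≤ N x := (hsand x).1
    have h3 : ς⁻¹ * Stmt10Aux.factorNorm M P u ≤ ς⁻¹ * M x :=
      mul_le_mul_of_nonneg_left h1 (by positivity)
    linarith
  · have hstep : ∀ x, P x = u → ς⁻¹ * N' u ≤ M x := by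
      intro x hx
      have h1 : N' u ≤ N x := by
        rw [hN' u]
        exact csInf_le ⟨0, fun r ⟨z, _, hr⟩ => hr ▸ hN.1 z⟩ ⟨x, hx, rfl⟩
      have h2 : N x ≤ ς * M x := (hsand x).2
      calc ς⁻¹ * N' u ≤ ς⁻¹ * (ς * M x) :=
            mul_le_mul_of_nonneg_left (le_trans h1 h2) (by positivity)
        _ = M x := by rw [← mul_assoc, inv_mul_cancel₀ hς0.ne', one_mul]
    obtain ⟨x₀, hx₀⟩ := hP u
    have h4 : ς⁻¹ * N' u ≤ Stmt10Aux.factorNorm M P u := by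
      refine le_csInf ⟨M x₀, x₀, hx₀, rfl⟩ ?_
      rintro r ⟨x, hx, rfl⟩
      exact hstep x hx
    have h5 := mul_le_mul_of_nonneg_left h4 hς0.le
    rw [← mul_assoc, mul_inv_cancel₀ hς0.ne', one_mul] at h5
    exact h5
end

section
/- Let θ be an absolute norm on ℝ^K that is (κ̄,ς̄)-regular, and let ‖·‖ᵢ be (κ',ς')-regular norms on ℝ^{nᵢ}, i = 1,…,K. Then the norm ‖(x₁,…,x_K)‖ = θ(‖x₁‖₁², …, ‖x_K‖_K²)^{1/2} on ℝ^{n₁+…+n_K} is (κ,ς)-regular with κ = 2κ̄ + κ' and ς = ς'·√ς̄. -/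
open scoped RealInnerProductSpace
open Real Matrix

section Aux

lemma gradient_inner_eq {E : Type*} [NormedAddCommGroup E] [InnerProductSpace ℝ E]
    [CompleteSpace E] (f : E → ℝ) (x h : E) : ⟪gradient f x, h⟫ = fderiv ℝ f x h :=
  InnerProductSpace.toDual_symm_apply

lemma IsNorm.zero' {E : Type*} [AddCommGroup E] [Module ℝ E] {N : E → ℝ} (hN : IsNorm N) :
    N 0 = 0 := (hN.2.1 0).mpr rfl

lemma IsNorm.neg' {E : Type*} [AddCommGroup E] [Module ℝ E] {N : E → ℝ} (hN : IsNorm N) (x : E) :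
    N (-x) = N x := by
  have := hN.2.2.1 (-1) x
  simpa using this

lemma IsNorm.sum_le {E : Type*} [AddCommGroup E] [Module ℝ E] {N : E → ℝ} (hN : IsNorm N)
    {ι : Type*} (s : Finset ι) (f : ι → E) : N (∑ i ∈ s, f i) ≤ ∑ i ∈ s, N (f i) := by
  classical
  induction s using Finset.induction_on with
  | empty => simp [hN.zero']
  | insert j s hj ih =>
    rw [Finset.sum_insert hj, Finset.sum_insert hj]
    exact le_trans (hN.2.2.2 _ _) (by linarith)

/-- helper: if `α ≤ c*t` for all small positive `t`, then `α ≤ 0`. -/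
lemma nonpos_of_le_mul {α c t₀ : ℝ} (hc : 0 ≤ c) (ht₀ : 0 < t₀)
    (h : ∀ t, 0 < t → t ≤ t₀ → α ≤ c * t) : α ≤ 0 := by
  by_contra hα
  push_neg at hα
  have hcc : (0:ℝ) < c + 1 := by linarith
  have h1 : 0 < α / (c + 1) := by positivity
  have ht : 0 < min t₀ (α / (c+1)) := lt_min ht₀ h1
  have h2 := h _ ht (min_le_left _ _)
  have h3 : c * min t₀ (α / (c+1)) ≤ c * (α/(c+1)) :=
    mul_le_mul_of_nonneg_left (min_le_right _ _) hc
  have h4 : c * (α/(c+1)) < α := by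
    rw [mul_div_assoc'] at *
    rw [div_lt_iff₀ hcc]
    nlinarith
  linarith

lemma smooth_key {E : Type*} [NormedAddCommGroup E] [InnerProductSpace ℝ E] [CompleteSpace E]
    {κ : ℝ} {N : E → ℝ} (hN : IsSmoothNorm κ N) (x h : E) :
    N (x + h) ^ 2 ≤ N x ^ 2 + fderiv ℝ (fun z => N z ^ 2) x h + κ * N h ^ 2 := by
  have := hN.2.2 x h
  rwa [gradient_inner_eq] at this

/-- dual bound: `|⟨∇(N²)(u), y⟩| ≤ 2 N(u) N(y)`. -/
lemma smooth_fderiv_bound {E : Type*} [NormedAddCommGroup E] [InnerProductSpace ℝ E]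
    [CompleteSpace E] {κ : ℝ} {N : E → ℝ} (hκ : 1 ≤ κ) (hN : IsSmoothNorm κ N) (u y : E) :
    |fderiv ℝ (fun z => N z ^ 2) u y| ≤ 2 * N u * N y := by
  have hnn := hN.1.1
  have aux : ∀ w : E, -(2 * N u * N w) ≤ fderiv ℝ (fun z => N z ^ 2) u w := by
    intro w
    set D := fderiv ℝ (fun z => N z ^ 2) u w with hD
    by_cases hw : N w = 0
    · have : w = 0 := (hN.1.2.1 w).mp hw
      rw [hD, this]
      simp [hN.1.zero', hnn u]
    have hw' : 0 < N w := lt_of_le_of_ne (hnn w) (Ne.symm hw)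
    by_cases hu : N u = 0
    · -- u = 0
      have hu0 : u = 0 := (hN.1.2.1 u).mp hu
      have key : ∀ t : ℝ, 0 < t → t ≤ 1 → -D ≤ ((κ-1) * N w ^ 2) * t := by
        intro t ht _
        have h1 := smooth_key hN u (t • w)
        have h2 : N (t • w) = t * N w := by
          rw [hN.1.2.2.1 t w, abs_of_pos ht]
        have h3 : N (u + t • w) = t * N w := by
          rw [hu0, zero_add, h2]
        have h4 : fderiv ℝ (fun z => N z ^ 2) u (t • w) = t * D := by
          rw [ContinuousLinearMap.map_smul]; simp [hD]
        rw [h3, h2, h4, hu] at h1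
        nlinarith
      have : -D ≤ 0 := nonpos_of_le_mul (by nlinarith) one_pos key
      nlinarith [mul_nonneg (mul_nonneg (by norm_num : (0:ℝ) ≤ 2) (hnn u)) (hnn w)]
    have hu' : 0 < N u := lt_of_le_of_ne (hnn u) (Ne.symm hu)
    have key : ∀ t : ℝ, 0 < t → t ≤ N u / N w →
        (-(2 * N u * N w) - D) ≤ ((κ-1) * N w ^ 2) * t := by
      intro t ht htle
      have h1 := smooth_key hN u (t • w)
      have h2 : N (t • w) = t * N w := by rw [hN.1.2.2.1 t w, abs_of_pos ht]
      have h4 : fderiv ℝ (fun z => N z ^ 2) u (t • w) = t * D := by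
        rw [ContinuousLinearMap.map_smul]; simp [hD]
      have htri : N u - t * N w ≤ N (u + t • w) := by
        have := hN.1.2.2.2 (u + t • w) (-(t • w))
        simp only [add_neg_cancel_right] at this
        rw [hN.1.neg', h2] at this
        linarith
      have hpos : 0 ≤ N u - t * N w := by
        rw [le_div_iff₀ hw'] at htle
        linarith
      have hsq : (N u - t * N w) ^ 2 ≤ N (u + t • w) ^ 2 := by
        apply pow_le_pow_left₀ hpos htri
      rw [h2, h4] at h1
      nlinarith
    have : -(2 * N u * N w) - D ≤ 0 :=
      nonpos_of_le_mul (by nlinarith) (div_pos hu' hw') key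
    linarith
  rw [abs_le]
  constructor
  · linarith [aux y]
  · have := aux (-y)
    rw [map_neg, hN.1.neg'] at this
    linarith

end Aux

section Mono
variable {K : ℕ} {N : EuclideanSpace ℝ (Fin K) → ℝ}

/-- convex combination bound -/
lemma IsNorm.comb_le {E : Type*} [AddCommGroup E] [Module ℝ E] {N : E → ℝ} (hN : IsNorm N)
    {c d : ℝ} (hc : 0 ≤ c) (hd : 0 ≤ d) (x y : E) :
    N (c • x + d • y) ≤ c * N x + d * N y := by
  refine le_trans (hN.2.2.2 _ _) ?_
  rw [hN.2.2.1, hN.2.2.1, abs_of_nonneg hc, abs_of_nonneg hd]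

lemma norm_update_le (hN : IsNorm N)
    (hflip : ∀ (t : EuclideanSpace ℝ (Fin K)) (i), N (WithLp.toLp 2 (Function.update t i (-(t i)))) = N t)
    (t : EuclideanSpace ℝ (Fin K)) (i : Fin K) {s : ℝ} (hs : |s| ≤ |t i|) :
    N (WithLp.toLp 2 (Function.update t i s)) ≤ N t := by
  by_cases hti : t i = 0
  · have hs0 : s = 0 := by
      rw [hti, abs_zero] at hs
      exact abs_nonpos_iff.mp hs
    rw [hs0, ← hti, Function.update_eq_self, WithLp.toLp_ofLp]
  · have habs : 0 < |t i| := abs_pos.mpr hti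
    set μ := s / t i with hμ
    have hμabs : |μ| ≤ 1 := by
      rw [hμ, abs_div]
      exact div_le_one_of_le₀ hs (le_of_lt habs)
    obtain ⟨hμ1, hμ2⟩ := abs_le.mp hμabs
    set lam := (1 + μ)/2 with hlam
    have hl0 : 0 ≤ lam := by rw [hlam]; linarith
    have hl1 : lam ≤ 1 := by rw [hlam]; linarith
    have u : EuclideanSpace ℝ (Fin K) := 0
    have hcomb : (WithLp.toLp 2 (Function.update t i s) : EuclideanSpace ℝ (Fin K)) =
        lam • t + (1 - lam) • (show EuclideanSpace ℝ (Fin K) from WithLp.toLp 2 (Function.update t i (-(t i)))) := by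
      ext j
      by_cases hj : j = i
      · subst hj
        simp only [PiLp.toLp_apply, PiLp.add_apply, PiLp.smul_apply, Function.update_self, smul_eq_mul]
        have : lam * t j + (1 - lam) * -(t j) = (2 * lam - 1) * t j := by ring
        rw [this, hlam]
        field_simp [hμ]
        rw [hμ]; field_simp; ring
      · simp only [PiLp.toLp_apply, PiLp.add_apply, PiLp.smul_apply, Function.update_of_ne hj, smul_eq_mul]
        ring
    rw [hcomb]
    calc N _ ≤ lam * N t + (1-lam) * N (WithLp.toLp 2 (Function.update t i (-(t i)))) :=
          hN.comb_le hl0 (by linarith) _ _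
      _ = N t := by rw [hflip t i]; ring

lemma norm_mono_of_flip (hN : IsNorm N)
    (hflip : ∀ (t : EuclideanSpace ℝ (Fin K)) (i), N (WithLp.toLp 2 (Function.update t i (-(t i)))) = N t)
    {a b : EuclideanSpace ℝ (Fin K)} (hab : ∀ i, |a i| ≤ b i) : N a ≤ N b := by
  classical
  have hb : ∀ i, 0 ≤ b i := fun i => le_trans (abs_nonneg _) (hab i)
  have key : ∀ S : Finset (Fin K),
      N (WithLp.toLp 2 (fun i => if i ∈ S then a i else b i) : EuclideanSpace ℝ (Fin K)) ≤ N b := by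
    intro S
    induction S using Finset.induction_on with
    | empty =>
      have : (WithLp.toLp 2 (fun i => if i ∈ (∅ : Finset (Fin K)) then a i else b i) :
          EuclideanSpace ℝ (Fin K)) = b := by
        ext i; simp
      rw [this]
    | insert j S hj ih =>
      have hupd : (WithLp.toLp 2 (fun i => if i ∈ insert j S then a i else b i) : EuclideanSpace ℝ (Fin K)) =
          WithLp.toLp 2 (Function.update (WithLp.toLp 2 (fun i => if i ∈ S then a i else b i) : EuclideanSpace ℝ (Fin K)) j
            (a j)) := by
        ext i
        by_cases hi : i = j
        · subst hi; simp [hj]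
        · simp [Function.update_of_ne hi, hi]
      rw [hupd]
      refine le_trans (norm_update_le hN hflip _ j ?_) ih
      simp only [if_neg hj]
      rw [abs_of_nonneg (hb j)]
      exact hab j
  have := key Finset.univ
  simpa using this

/-- linear upper bound for a norm on Euclidean space -/
lemma isNorm_le_const {m : ℕ} {N : EuclideanSpace ℝ (Fin m) → ℝ} (hN : IsNorm N) :
    ∃ C : ℝ, 0 ≤ C ∧ ∀ y, N y ≤ C * ‖y‖ := by
  refine ⟨∑ i, N (EuclideanSpace.single i 1), Finset.sum_nonneg fun i _ => hN.1 _, fun y => ?_⟩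
  have hdecomp : y = ∑ i, y i • EuclideanSpace.single i (1:ℝ) := by
    have := (EuclideanSpace.basisFun (Fin m) ℝ).sum_repr y
    simp only [EuclideanSpace.basisFun_apply, EuclideanSpace.basisFun_repr] at this
    exact this.symm
  have habs : ∀ i, |y i| ≤ ‖y‖ := by
    intro i
    have h1 : |y i| = Real.sqrt ((y i)^2) := (Real.sqrt_sq_eq_abs _).symm
    rw [h1, EuclideanSpace.norm_eq]
    apply Real.sqrt_le_sqrt
    have h2 : ‖y i‖^2 ≤ ∑ j, ‖y j‖^2 :=
      Finset.single_le_sum (f := fun j => ‖y j‖^2) (fun j _ => by positivity) (Finset.mem_univ i)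
    simpa [Real.norm_eq_abs, sq_abs] using h2
  calc N y = N (∑ i, y i • EuclideanSpace.single i (1:ℝ)) := by rw [← hdecomp]
    _ ≤ ∑ i, N (y i • EuclideanSpace.single i (1:ℝ)) := hN.sum_le _ _
    _ = ∑ i, |y i| * N (EuclideanSpace.single i (1:ℝ)) := by
        refine Finset.sum_congr rfl fun i _ => ?_
        rw [hN.2.2.1]
    _ ≤ ∑ i, ‖y‖ * N (EuclideanSpace.single i (1:ℝ)) := by
        refine Finset.sum_le_sum fun i _ => ?_
        exact mul_le_mul_of_nonneg_right (habs i) (hN.1 _)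
    _ = (∑ i, N (EuclideanSpace.single i 1)) * ‖y‖ := by
        rw [Finset.sum_mul]
        exact Finset.sum_congr rfl fun i _ => mul_comm _ _
end Mono


lemma sq_le_imp {a b : ℝ} (ha : 0 ≤ a) (hb : 0 ≤ b) (h : a^2 ≤ b^2) : a ≤ b := by
  nlinarith [sq_nonneg (a-b), sq_nonneg (a+b)]

section Symm
variable {K : ℕ}

def flipFun (ε : Fin K → Bool) (t : EuclideanSpace ℝ (Fin K)) : EuclideanSpace ℝ (Fin K) :=
  WithLp.toLp 2 (fun i => if ε i then t i else -t i)

lemma flipFun_add (ε : Fin K → Bool) (s t : EuclideanSpace ℝ (Fin K)) :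
    flipFun ε (s + t) = flipFun ε s + flipFun ε t := by
  ext i
  by_cases h : ε i <;> simp [flipFun, h] <;> ring

lemma flipFun_smul (ε : Fin K → Bool) (c : ℝ) (t : EuclideanSpace ℝ (Fin K)) :
    flipFun ε (c • t) = c • flipFun ε t := by
  ext i
  by_cases h : ε i <;> simp [flipFun, h] <;> ring

lemma flipFun_zero (ε : Fin K → Bool) : flipFun ε (0 : EuclideanSpace ℝ (Fin K)) = 0 := by
  ext i
  by_cases h : ε i <;> simp [flipFun, h]

lemma flipFun_abs (ε : Fin K → Bool) (t : EuclideanSpace ℝ (Fin K)) (i : Fin K) :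
    |flipFun ε t i| = |t i| := by
  by_cases h : ε i <;> simp [flipFun, h]

noncomputable def flipCLM (ε : Fin K → Bool) :
    EuclideanSpace ℝ (Fin K) →L[ℝ] EuclideanSpace ℝ (Fin K) :=
  LinearMap.toContinuousLinearMap
    { toFun := flipFun ε
      map_add' := flipFun_add ε
      map_smul' := flipFun_smul ε }

lemma flipCLM_apply (ε : Fin K → Bool) (t : EuclideanSpace ℝ (Fin K)) :
    flipCLM ε t = flipFun ε t := rfl

/-- symmetrization: from a smooth proxy of an absolute norm, get a flip-invariant
smooth proxy. -/
lemma symmetrize (θ : EuclideanSpace ℝ (Fin K) → ℝ)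
    (hθabs : ∀ t : EuclideanSpace ℝ (Fin K), θ t = θ (WithLp.toLp 2 (fun i => |t i|)))
    (κb ςb : ℝ) (hκb : 1 ≤ κb) (hςb : 1 ≤ ςb)
    (θb : EuclideanSpace ℝ (Fin K) → ℝ) (hθb : IsSmoothNorm κb θb)
    (hθw : ∀ t, ςb⁻¹ * θb t ≤ θ t ∧ θ t ≤ ςb * θb t) :
    ∃ ψ : EuclideanSpace ℝ (Fin K) → ℝ, IsSmoothNorm κb ψ ∧
      (∀ (t : EuclideanSpace ℝ (Fin K)) (i), ψ (WithLp.toLp 2 (Function.update t i (-(t i)))) = ψ t) ∧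
      (∀ t, ψ t ≤ ςb * θ t ∧ θ t ≤ ςb * ψ t) := by
  classical
  set c : ℝ := ((2:ℝ)^K)⁻¹ with hc
  have hc0 : 0 < c := by positivity
  set Q : EuclideanSpace ℝ (Fin K) → ℝ :=
    fun t => c * ∑ ε : Fin K → Bool, θb (flipFun ε t) ^ 2 with hQ
  have hQ0 : ∀ t, 0 ≤ Q t := by
    intro t
    apply mul_nonneg (le_of_lt hc0)
    apply Finset.sum_nonneg
    intro ε _
    positivity
  set ψ : EuclideanSpace ℝ (Fin K) → ℝ := fun t => Real.sqrt (Q t) with hψ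
  have hψ0 : ∀ t, 0 ≤ ψ t := fun t => Real.sqrt_nonneg _
  have hψsq : ∀ t, ψ t ^ 2 = Q t := fun t => Real.sq_sqrt (hQ0 t)
  have hcard : (Fintype.card (Fin K → Bool) : ℝ) = 2^K := by
    simp [Fintype.card_fun]
  -- norm axioms
  have hzero : ∀ t, ψ t = 0 ↔ t = 0 := by
    intro t
    constructor
    · intro h
      have hQt : Q t = 0 := by
        have h2 := hψsq t
        rw [h] at h2
        simpa using h2.symm
      have hsum : ∑ ε : Fin K → Bool, θb (flipFun ε t) ^ 2 = 0 := by
        have h3 : c * ∑ ε : Fin K → Bool, θb (flipFun ε t) ^ 2 = 0 := hQt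
        rcases mul_eq_zero.mp h3 with h'|h'
        · exact absurd h' (ne_of_gt hc0)
        · exact h'
      have hterm := (Finset.sum_eq_zero_iff_of_nonneg
        (fun ε _ => by positivity)).mp hsum (fun _ => true) (Finset.mem_univ _)
      have htt : flipFun (fun _ => true) t = t := by
        ext i; simp [flipFun]
      rw [htt] at hterm
      exact (hθb.1.2.1 t).mp (sq_eq_zero_iff.mp hterm)
    · intro h
      rw [h]
      have hQ0' : Q 0 = 0 := by
        show c * ∑ ε : Fin K → Bool, θb (flipFun ε (0:EuclideanSpace ℝ (Fin K))) ^ 2 = 0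
        have h4 : ∀ ε : Fin K → Bool, θb (flipFun ε (0:EuclideanSpace ℝ (Fin K))) ^ 2 = 0 := by
          intro ε; rw [flipFun_zero, hθb.1.zero']; ring
        rw [Finset.sum_congr rfl (fun ε _ => h4 ε)]
        simp
      show Real.sqrt (Q 0) = 0
      rw [hQ0', Real.sqrt_zero]
  have hhomog : ∀ (r : ℝ) (t), ψ (r • t) = |r| * ψ t := by
    intro r t
    have hQr : Q (r • t) = r^2 * Q t := by
      have h5 : ∀ ε : Fin K → Bool, θb (flipFun ε (r • t))^2 = r^2 * θb (flipFun ε t)^2 := by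
        intro ε
        rw [flipFun_smul, hθb.1.2.2.1, mul_pow, sq_abs]
      show c * ∑ ε : Fin K → Bool, θb (flipFun ε (r • t)) ^ 2
          = r^2 * (c * ∑ ε : Fin K → Bool, θb (flipFun ε t) ^ 2)
      rw [Finset.sum_congr rfl (fun ε _ => h5 ε), ← Finset.mul_sum]
      ring
    show Real.sqrt (Q (r • t)) = |r| * Real.sqrt (Q t)
    rw [hQr, Real.sqrt_mul (sq_nonneg r), Real.sqrt_sq_eq_abs]
  have htri : ∀ s t, ψ (s + t) ≤ ψ s + ψ t := by
    intro s t
    set A := ∑ ε : Fin K → Bool, θb (flipFun ε s) ^ 2 with hA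
    set B := ∑ ε : Fin K → Bool, θb (flipFun ε t) ^ 2 with hB
    have hA0 : 0 ≤ A := Finset.sum_nonneg fun ε _ => by positivity
    have hB0 : 0 ≤ B := Finset.sum_nonneg fun ε _ => by positivity
    have hsum : ∑ ε : Fin K → Bool, θb (flipFun ε (s+t)) ^ 2 ≤
        A + 2 * Real.sqrt A * Real.sqrt B + B := by
      have hterm : ∀ ε : Fin K → Bool, θb (flipFun ε (s+t)) ^ 2 ≤
          (θb (flipFun ε s) + θb (flipFun ε t)) ^ 2 := by
        intro ε
        rw [flipFun_add]
        apply pow_le_pow_left₀ (hθb.1.1 _) (hθb.1.2.2.2 _ _)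
      calc ∑ ε : Fin K → Bool, θb (flipFun ε (s+t)) ^ 2
          ≤ ∑ ε : Fin K → Bool, (θb (flipFun ε s) + θb (flipFun ε t)) ^ 2 :=
            Finset.sum_le_sum fun ε _ => hterm ε
        _ = A + 2 * (∑ ε : Fin K → Bool, θb (flipFun ε s) * θb (flipFun ε t)) + B := by
            rw [hA, hB, Finset.mul_sum, ← Finset.sum_add_distrib, ← Finset.sum_add_distrib]
            apply Finset.sum_congr rfl
            intro ε _
            ring
        _ ≤ A + 2 * Real.sqrt A * Real.sqrt B + B := by
            have hcs : (∑ ε : Fin K → Bool, θb (flipFun ε s) * θb (flipFun ε t)) ≤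
                Real.sqrt A * Real.sqrt B := by
              have h1 := Finset.sum_mul_sq_le_sq_mul_sq Finset.univ
                (fun ε => θb (flipFun ε s)) (fun ε => θb (flipFun ε t))
              have h2 : 0 ≤ ∑ ε : Fin K → Bool, θb (flipFun ε s) * θb (flipFun ε t) :=
                Finset.sum_nonneg fun ε _ => mul_nonneg (hθb.1.1 _) (hθb.1.1 _)
              have h3 : (∑ ε : Fin K → Bool, θb (flipFun ε s) * θb (flipFun ε t))^2 ≤ A * B := by
                rw [hA, hB]; exact h1
              calc (∑ ε : Fin K → Bool, θb (flipFun ε s) * θb (flipFun ε t))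
                  = Real.sqrt ((∑ ε : Fin K → Bool, θb (flipFun ε s) * θb (flipFun ε t))^2) :=
                    (Real.sqrt_sq h2).symm
                _ ≤ Real.sqrt (A * B) := Real.sqrt_le_sqrt h3
                _ = Real.sqrt A * Real.sqrt B := Real.sqrt_mul hA0 _
            linarith
    have hfinal : Q (s + t) ≤ (ψ s + ψ t)^2 := by
      have hψs : ψ s = Real.sqrt c * Real.sqrt A := by
        show Real.sqrt (c * A) = _
        rw [Real.sqrt_mul (le_of_lt hc0)]
      have hψt : ψ t = Real.sqrt c * Real.sqrt B := by
        show Real.sqrt (c * B) = _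
        rw [Real.sqrt_mul (le_of_lt hc0)]
      have hc' : Real.sqrt c ^ 2 = c := Real.sq_sqrt (le_of_lt hc0)
      have hA' : Real.sqrt A ^ 2 = A := Real.sq_sqrt hA0
      have hB' : Real.sqrt B ^ 2 = B := Real.sq_sqrt hB0
      have hexp : (ψ s + ψ t)^2 = c * (A + 2 * Real.sqrt A * Real.sqrt B + B) := by
        rw [hψs, hψt]
        have hring : (Real.sqrt c * Real.sqrt A + Real.sqrt c * Real.sqrt B)^2 =
            Real.sqrt c^2 * Real.sqrt A^2 + 2 * Real.sqrt c^2 * (Real.sqrt A * Real.sqrt B)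
              + Real.sqrt c^2 * Real.sqrt B^2 := by ring
        rw [hring, hc', hA', hB']
        ring
      rw [hexp]
      show c * ∑ ε : Fin K → Bool, θb (flipFun ε (s+t)) ^ 2 ≤ _
      exact mul_le_mul_of_nonneg_left hsum (le_of_lt hc0)
    calc ψ (s + t) = Real.sqrt (Q (s+t)) := rfl
      _ ≤ Real.sqrt ((ψ s + ψ t)^2) := Real.sqrt_le_sqrt hfinal
      _ = ψ s + ψ t := Real.sqrt_sq (by positivity)
  have hψnorm : IsNorm ψ := ⟨hψ0, hzero, hhomog, htri⟩
  have hψ2fun : (fun t => ψ t ^ 2) = Q := funext hψsq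
  have hθbC : ContDiff ℝ 1 (fun z => θb z ^ 2) := hθb.2.1
  have hQC : ContDiff ℝ 1 Q := by
    show ContDiff ℝ 1 (fun t => c * ∑ ε : Fin K → Bool, θb (flipFun ε t) ^ 2)
    apply ContDiff.mul contDiff_const
    apply ContDiff.sum
    intro ε _
    have h6 : (fun t : EuclideanSpace ℝ (Fin K) => θb (flipFun ε t) ^ 2)
        = (fun z => θb z ^ 2) ∘ (flipCLM ε) := rfl
    rw [h6]
    exact hθbC.comp (flipCLM ε).contDiff
  have hQD : ∀ t : EuclideanSpace ℝ (Fin K), HasFDerivAt Q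
      (c • ∑ ε : Fin K → Bool,
        (fderiv ℝ (fun z => θb z ^ 2) (flipFun ε t)).comp (flipCLM ε)) t := by
    intro t
    have h1 : ∀ ε : Fin K → Bool, HasFDerivAt (fun u => θb (flipFun ε u) ^ 2)
        ((fderiv ℝ (fun z => θb z ^ 2) (flipFun ε t)).comp (flipCLM ε)) t := by
      intro ε
      have hd : HasFDerivAt (fun z => θb z ^ 2)
          (fderiv ℝ (fun z => θb z ^ 2) (flipFun ε t)) (flipFun ε t) :=
        ((hθbC.differentiable one_ne_zero) _).hasFDerivAt
      exact hd.comp t (flipCLM ε).hasFDerivAt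
    exact HasFDerivAt.const_mul (HasFDerivAt.fun_sum (fun ε _ => h1 ε)) c
  have hsmooth : ∀ t h, ψ (t + h)^2 ≤ ψ t^2 +
      ⟪gradient (fun z => ψ z ^ 2) t, h⟫ + κb * ψ h ^ 2 := by
    intro t h
    rw [gradient_inner_eq, hψ2fun, hψsq, hψsq, hψsq, (hQD t).fderiv]
    have hper : ∀ ε : Fin K → Bool, θb (flipFun ε (t+h))^2 ≤ θb (flipFun ε t)^2 +
        (fderiv ℝ (fun z => θb z ^ 2) (flipFun ε t)) (flipFun ε h)
        + κb * θb (flipFun ε h)^2 := by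
      intro ε
      rw [flipFun_add]
      exact smooth_key hθb _ _
    have hsums : ∑ ε : Fin K → Bool, θb (flipFun ε (t+h))^2 ≤
        (∑ ε : Fin K → Bool, θb (flipFun ε t)^2) +
        (∑ ε : Fin K → Bool, (fderiv ℝ (fun z => θb z ^ 2) (flipFun ε t)) (flipFun ε h)) +
        κb * ∑ ε : Fin K → Bool, θb (flipFun ε h)^2 := by
      rw [Finset.mul_sum, ← Finset.sum_add_distrib, ← Finset.sum_add_distrib]
      exact Finset.sum_le_sum fun ε _ => hper ε
    have happ : (c • ∑ ε : Fin K → Bool,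
        (fderiv ℝ (fun z => θb z ^ 2) (flipFun ε t)).comp (flipCLM ε)) h =
        c * ∑ ε : Fin K → Bool,
          (fderiv ℝ (fun z => θb z ^ 2) (flipFun ε t)) (flipFun ε h) := by
      simp only [ContinuousLinearMap.smul_apply, ContinuousLinearMap.sum_apply,
        ContinuousLinearMap.comp_apply, flipCLM_apply, smul_eq_mul]
    rw [happ]
    show c * ∑ ε : Fin K → Bool, θb (flipFun ε (t+h))^2 ≤
      c * (∑ ε : Fin K → Bool, θb (flipFun ε t)^2) + _ + κb * (c * ∑ ε : Fin K → Bool, θb (flipFun ε h)^2)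
    nlinarith [mul_le_mul_of_nonneg_left hsums (le_of_lt hc0)]
  have hflip : ∀ (t : EuclideanSpace ℝ (Fin K)) (i),
      ψ (WithLp.toLp 2 (Function.update t i (-(t i)))) = ψ t := by
    intro t i
    have hQf : Q (WithLp.toLp 2 (Function.update t i (-(t i)))) = Q t := by
      show c * ∑ ε : Fin K → Bool, θb (flipFun ε (WithLp.toLp 2 (Function.update t i (-(t i))))) ^ 2
          = c * ∑ ε : Fin K → Bool, θb (flipFun ε t) ^ 2
      congr 1
      have hinv : Function.Involutive (fun ε : Fin K → Bool => Function.update ε i (!ε i)) := by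
        intro ε
        funext j
        by_cases hj : j = i
        · subst hj; simp
        · simp [Function.update_of_ne hj]
      apply Fintype.sum_bijective _ hinv.bijective
      intro ε
      congr 2
      ext j
      by_cases hj : j = i
      · subst hj
        by_cases hε : ε j <;> simp [flipFun, hε]
      · simp [flipFun, Function.update_of_ne hj]
    show Real.sqrt (Q _) = Real.sqrt (Q t)
    rw [hQf]
  have hςb0 : (0:ℝ) < ςb := by linarith
  have hsand : ∀ t, ψ t ≤ ςb * θ t ∧ θ t ≤ ςb * ψ t := by
    intro t
    have hθnn : 0 ≤ θ t := by
      have h1 := (hθw t).1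
      have h2 := hθb.1.1 t
      nlinarith [inv_pos.mpr hςb0]
    have hflipθ : ∀ ε : Fin K → Bool, θ (flipFun ε t) = θ t := by
      intro ε
      rw [hθabs (flipFun ε t), hθabs t]
      congr 1
      ext i
      exact flipFun_abs ε t i
    have hθsq : θ t ^ 2 = c * ∑ ε : Fin K → Bool, θ (flipFun ε t) ^ 2 := by
      rw [Finset.sum_congr rfl (fun ε _ => by rw [hflipθ ε])]
      rw [Finset.sum_const, Finset.card_univ, nsmul_eq_mul, hcard]
      rw [hc]
      have h2K : (0:ℝ) < 2^K := by positivity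
      field_simp
    constructor
    · -- ψ t ≤ ςb * θ t
      have hsq : ψ t ^2 ≤ ςb^2 * θ t^2 := by
        rw [hψsq, hθsq]
        have hterm : ∀ ε : Fin K → Bool, θb (flipFun ε t)^2 ≤ ςb^2 * θ (flipFun ε t)^2 := by
          intro ε
          have h1 := (hθw (flipFun ε t)).1
          have hbb : θb (flipFun ε t) ≤ ςb * θ (flipFun ε t) := by
            have h7 := mul_le_mul_of_nonneg_left h1 (le_of_lt hςb0)
            rwa [← mul_assoc, mul_inv_cancel₀ (ne_of_gt hςb0), one_mul] at h7
          have hbnn := hθb.1.1 (flipFun ε t)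
          nlinarith
        calc Q t ≤ c * ∑ ε : Fin K → Bool, ςb^2 * θ (flipFun ε t) ^ 2 :=
              mul_le_mul_of_nonneg_left (Finset.sum_le_sum fun ε _ => hterm ε) (le_of_lt hc0)
          _ = ςb^2 * (c * ∑ ε : Fin K → Bool, θ (flipFun ε t) ^ 2) := by
              rw [← Finset.mul_sum]; ring
      have h8 : (ςb * θ t)^2 = ςb^2 * θ t^2 := by ring
      exact sq_le_imp (hψ0 t) (mul_nonneg (le_of_lt hςb0) hθnn) (by rw [h8]; exact hsq)
    · -- θ t ≤ ςb * ψ t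
      have hsq : θ t ^2 ≤ ςb^2 * ψ t^2 := by
        rw [hψsq, hθsq]
        have hterm : ∀ ε : Fin K → Bool, θ (flipFun ε t)^2 ≤ ςb^2 * θb (flipFun ε t)^2 := by
          intro ε
          have h1 := (hθw (flipFun ε t)).2
          have hnn : 0 ≤ θ (flipFun ε t) := by rw [hflipθ ε]; exact hθnn
          nlinarith
        calc c * ∑ ε : Fin K → Bool, θ (flipFun ε t) ^ 2
            ≤ c * ∑ ε : Fin K → Bool, ςb^2 * θb (flipFun ε t) ^ 2 :=
              mul_le_mul_of_nonneg_left (Finset.sum_le_sum fun ε _ => hterm ε) (le_of_lt hc0)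
          _ = ςb^2 * Q t := by rw [← Finset.mul_sum]; ring
      have h8 : (ςb * ψ t)^2 = ςb^2 * ψ t^2 := by ring
      exact sq_le_imp hθnn (mul_nonneg (le_of_lt hςb0) (hψ0 t)) (by rw [h8]; exact hsq)
  exact ⟨ψ, ⟨hψnorm, by rw [hψ2fun]; exact hQC, hsmooth⟩, hflip, hsand⟩

end Symm

set_option maxHeartbeats 1000000

section Aggregate

variable {K : ℕ} {n : Fin K → ℕ}

lemma euclid_norm_le_sum {m : ℕ} (u : EuclideanSpace ℝ (Fin m)) : ‖u‖ ≤ ∑ i, |u i| := by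
  rw [EuclideanSpace.norm_eq]
  have h1 : ∑ i, ‖u i‖^2 ≤ (∑ i, |u i|)^2 := by
    have := Finset.sum_sq_le_sq_sum_of_nonneg
      (s := (Finset.univ : Finset (Fin m))) (f := fun i : Fin m => |u i|)
      (fun i _ => abs_nonneg _)
    simpa [Real.norm_eq_abs] using this
  calc Real.sqrt (∑ i, ‖u i‖^2) ≤ Real.sqrt ((∑ i, |u i|)^2) := Real.sqrt_le_sqrt h1
    _ = ∑ i, |u i| := Real.sqrt_sq (Finset.sum_nonneg fun i _ => abs_nonneg _)

lemma piLp_apply_norm_le (z : PiLp 2 (fun i => EuclideanSpace ℝ (Fin (n i)))) (i : Fin K) :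
    ‖z i‖ ≤ ‖z‖ := by
  apply sq_le_imp (norm_nonneg _) (norm_nonneg _)
  rw [PiLp.norm_sq_eq_of_L2 (fun i => EuclideanSpace ℝ (Fin (n i))) z]
  exact Finset.single_le_sum (f := fun j => ‖z j‖^2) (fun j _ => by positivity)
    (Finset.mem_univ i)

lemma amgm {a b lam : ℝ} (hl : 0 < lam) : 2*a*b ≤ lam*a^2 + lam⁻¹*b^2 := by
  have h1 : 0 ≤ lam⁻¹ * (lam*a - b)^2 := mul_nonneg (by positivity) (sq_nonneg _)
  have h2 : lam⁻¹ * (lam*a - b)^2 = lam*a^2 - 2*a*b + lam⁻¹*b^2 := by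
    field_simp
    ring
  linarith [h2 ▸ h1]

lemma lam_opt' {a b : ℝ} (ha : 0 < a) (hb : 0 < b) :
    (b / a) * a^2 + (b / a)⁻¹ * b^2 = 2 * a * b := by
  rw [inv_div]
  field_simp
  ring

lemma agg_arith {V s W psl D κb : ℝ} (hV : 0 < V) (hs : 0 < s) (hκb : 1 ≤ κb)
    (hW0 : 0 ≤ W) (hpsl0 : 0 ≤ psl)
    (hpsl : psl ≤ 2 * Real.sqrt V * Real.sqrt s)
    (hD : |D| ≤ 2 * V * psl)
    (hWsq : W^2 ≤ V^2 + D + κb * psl^2) :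
    W ≤ V + (2*V)⁻¹ * D + 2 * κb * s := by
  set a := Real.sqrt V with ha
  set b := Real.sqrt s with hb
  have ha2 : a^2 = V := Real.sq_sqrt hV.le
  have hb2 : b^2 = s := Real.sq_sqrt hs.le
  have ha0 : 0 < a := Real.sqrt_pos.mpr hV
  have hb0 : 0 < b := Real.sqrt_pos.mpr hs
  set A := (2*V)⁻¹ * D with hA
  have hDA : D = 2 * V * A := by
    rw [hA]
    field_simp
  have hAl : -(psl) ≤ A := by
    rw [hA]
    have h1 : -(2*V*psl) ≤ D := by linarith [(abs_le.mp hD).1]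
    have h2 : (2*V)⁻¹ * (-(2*V*psl)) ≤ (2*V)⁻¹ * D :=
      mul_le_mul_of_nonneg_left h1 (by positivity)
    have h3 : (2*V)⁻¹ * (-(2*V*psl)) = -psl := by
      have h4 : (2*V)⁻¹ * (2*V) = 1 := inv_mul_cancel₀ (by positivity)
      calc (2*V)⁻¹ * (-(2*V*psl)) = -(((2*V)⁻¹ * (2*V)) * psl) := by ring
        _ = -psl := by rw [h4]; ring
    linarith [h3 ▸ h2]
  have hR0 : 0 ≤ V + A + 2*κb*s := by
    nlinarith [sq_nonneg (a - b), hAl, hpsl,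
      mul_nonneg (by linarith : (0:ℝ) ≤ 2*κb - 1) (sq_nonneg b), ha2, hb2]
  have hsq : W^2 ≤ (V + A + 2*κb*s)^2 := by
    have h1 : psl^2 ≤ 4*V*s := by
      have h2 : psl * psl ≤ (2*a*b) * (2*a*b) :=
        mul_le_mul hpsl hpsl hpsl0 (by positivity)
      have h3 : a^2 * b^2 = V * s := by rw [ha2, hb2]
      nlinarith [h2, h3]
    have h2 : W^2 ≤ V^2 + 2*V*A + 4*κb*V*s := by
      rw [hDA] at hWsq
      nlinarith [mul_le_mul_of_nonneg_left h1 (by linarith : (0:ℝ) ≤ κb)]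
    nlinarith [sq_nonneg (A + 2*κb*s)]
  exact sq_le_imp hW0 hR0 hsq

lemma aggregate_smooth
    (ψ : EuclideanSpace ℝ (Fin K) → ℝ) (κb κ' : ℝ) (hκb : 1 ≤ κb) (hκ' : 1 ≤ κ')
    (hψ : IsSmoothNorm κb ψ)
    (hψflip : ∀ (t : EuclideanSpace ℝ (Fin K)) (i), ψ (WithLp.toLp 2 (Function.update t i (-(t i)))) = ψ t)
    (Mi : ∀ i, EuclideanSpace ℝ (Fin (n i)) → ℝ)
    (hMi : ∀ i, IsSmoothNorm κ' (Mi i)) :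
    IsSmoothNorm (2*κb + κ')
      (fun x : PiLp 2 (fun i => EuclideanSpace ℝ (Fin (n i))) =>
        Real.sqrt (ψ (WithLp.toLp 2 (fun i => Mi i (x i) ^ 2)))) := by
  classical
  have hψn := hψ.1
  have hψ0 : ∀ u, 0 ≤ ψ u := hψn.1
  have hMin : ∀ i, IsNorm (Mi i) := fun i => (hMi i).1
  set v : PiLp 2 (fun i => EuclideanSpace ℝ (Fin (n i))) → EuclideanSpace ℝ (Fin K) :=
    fun x => WithLp.toLp 2 (fun i => Mi i (x i) ^ 2) with hv
  set M : PiLp 2 (fun i => EuclideanSpace ℝ (Fin (n i))) → ℝ :=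
    fun x => Real.sqrt (ψ (v x)) with hM
  show IsSmoothNorm (2*κb + κ') M
  have hM0 : ∀ x, 0 ≤ M x := fun x => Real.sqrt_nonneg _
  have hMsq : ∀ x, M x ^ 2 = ψ (v x) := fun x => Real.sq_sqrt (hψ0 _)
  have hv0 : v 0 = 0 := by
    ext i : 1
    show Mi i ((0 : PiLp 2 (fun i => EuclideanSpace ℝ (Fin (n i)))) i) ^ 2
      = (0 : EuclideanSpace ℝ (Fin K)) i
    simp [(hMin i).zero']
  have hveq0 : ∀ x, v x = 0 → x = 0 := by
    intro x hx
    ext i : 1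
    have h1 : Mi i (x i) ^ 2 = 0 := by
      have h2 := congrArg (fun w => w i) hx
      rw [hv] at h2
      simpa using h2
    have h3 : Mi i (x i) = 0 := sq_eq_zero_iff.mp h1
    have h4 := ((hMin i).2.1 _).mp h3
    simpa using h4
  have hVpos : ∀ x, x ≠ 0 → 0 < ψ (v x) := by
    intro x hx
    rcases lt_or_eq_of_le (hψ0 (v x)) with h|h
    · exact h
    · exact absurd (hveq0 x ((hψn.2.1 _).mp h.symm)) hx
  have hvsmul : ∀ (c : ℝ) x, v (c • x) = (c^2) • v x := by
    intro c x
    ext i : 1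
    show Mi i ((c • x) i) ^ 2 = ((c^2) • v x) i
    have h1 : (c • x) i = c • (x i) := rfl
    rw [h1, (hMin i).2.2.1]
    show (|c| * Mi i (x i))^2 = c^2 * (Mi i (x i) ^2)
    rw [mul_pow, sq_abs]
  have hvadd_le : ∀ x y (lam : ℝ), 0 < lam → ψ (v (x + y)) ≤
      (1 + lam) * ψ (v x) + (1 + lam⁻¹) * ψ (v y) := by
    intro x y lam hlam
    have hcomp : ∀ i, |v (x + y) i| ≤
        ((1 + lam) • v x + (1 + lam⁻¹) • v y) i := by
      intro i
      have h1 : (x + y) i = x i + y i := rfl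
      have htri := (hMin i).2.2.2 (x i) (y i)
      have hnn := (hMin i).1
      have hsq : Mi i ((x+y) i) ^2 ≤ (Mi i (x i) + Mi i (y i))^2 := by
        rw [h1]
        exact pow_le_pow_left₀ (hnn _) htri 2
      have hag : 2 * Mi i (x i) * Mi i (y i) ≤
          lam * Mi i (x i)^2 + lam⁻¹ * Mi i (y i)^2 := amgm hlam
      have h2 : ((1 + lam) • v x + (1 + lam⁻¹) • v y) i
          = (1+lam) * Mi i (x i)^2 + (1+lam⁻¹) * Mi i (y i)^2 := rfl
      have h3 : |v (x + y) i| = Mi i ((x+y) i) ^ 2 := abs_of_nonneg (sq_nonneg _)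
      rw [h3, h2]
      nlinarith
    have hmono := norm_mono_of_flip hψn hψflip
      (a := v (x + y)) (b := (1 + lam) • v x + (1 + lam⁻¹) • v y) hcomp
    refine le_trans hmono ?_
    exact hψn.comb_le (by positivity) (by positivity) _ _
  have hMtri : ∀ x y, M (x + y) ≤ M x + M y := by
    intro x y
    by_cases hx : x = 0
    · subst hx
      rw [zero_add]
      nlinarith [hM0 y, hM0 (0 : PiLp 2 (fun i => EuclideanSpace ℝ (Fin (n i))))]
    by_cases hy : y = 0
    · subst hy
      rw [add_zero]
      nlinarith [hM0 x, hM0 (0 : PiLp 2 (fun i => EuclideanSpace ℝ (Fin (n i))))]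
    have hP := hVpos x hx
    have hQ := hVpos y hy
    set a := Real.sqrt (ψ (v x)) with ha
    set b := Real.sqrt (ψ (v y)) with hb
    have hsP : a ^ 2 = ψ (v x) := Real.sq_sqrt hP.le
    have hsQ : b ^ 2 = ψ (v y) := Real.sq_sqrt hQ.le
    have ha0 : 0 < a := Real.sqrt_pos.mpr hP
    have hb0 : 0 < b := Real.sqrt_pos.mpr hQ
    have hlam0 : 0 < b / a := div_pos hb0 ha0
    have h1 := hvadd_le x y (b/a) hlam0
    have h2 : (1 + b/a) * ψ (v x) + (1 + (b/a)⁻¹) * ψ (v y) = (a+b)^2 := by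
      rw [← hsP, ← hsQ]
      field_simp
      ring
    show Real.sqrt (ψ (v (x+y))) ≤ a + b
    calc Real.sqrt (ψ (v (x+y))) ≤ Real.sqrt ((a+b)^2) :=
          Real.sqrt_le_sqrt (by rw [← h2]; exact h1)
      _ = a + b := Real.sqrt_sq (by positivity)
  have hMnorm : IsNorm M := by
    refine ⟨hM0, ?_, ?_, hMtri⟩
    · intro x
      constructor
      · intro h
        have h1 : ψ (v x) = 0 := by
          have h2 := hMsq x
          rw [h] at h2
          simpa using h2.symm
        exact hveq0 x ((hψn.2.1 _).mp h1)
      · intro h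
        rw [h]
        show Real.sqrt (ψ (v 0)) = 0
        rw [hv0, hψn.zero', Real.sqrt_zero]
    · intro c x
      show Real.sqrt (ψ (v (c • x))) = |c| * Real.sqrt (ψ (v x))
      rw [hvsmul, hψn.2.2.1, abs_of_nonneg (sq_nonneg c),
        Real.sqrt_mul (sq_nonneg c), Real.sqrt_sq_eq_abs]
  -- the ℓ vector of directional derivatives
  set ell : (x h : PiLp 2 (fun i => EuclideanSpace ℝ (Fin (n i)))) →
      EuclideanSpace ℝ (Fin K) :=
    fun x h => WithLp.toLp 2 (fun i => fderiv ℝ (fun z => Mi i z ^ 2) (x i) (h i)) with hell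
  -- λ-estimate on ψ(ℓ)
  have hellbound : ∀ x h (lam : ℝ), 0 < lam →
      ψ (ell x h) ≤ lam * ψ (v x) + lam⁻¹ * ψ (v h) := by
    intro x h lam hlam
    have hcomp : ∀ i, |ell x h i| ≤ (lam • v x + lam⁻¹ • v h) i := by
      intro i
      have h1 := smooth_fderiv_bound hκ' (hMi i) (x i) (h i)
      have h2 : 2 * Mi i (x i) * Mi i (h i) ≤
          lam * Mi i (x i)^2 + lam⁻¹ * Mi i (h i)^2 := amgm hlam
      have h3 : (lam • v x + lam⁻¹ • v h) i
          = lam * Mi i (x i)^2 + lam⁻¹ * Mi i (h i)^2 := rfl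
      rw [h3]
      exact le_trans h1 h2
    have hmono := norm_mono_of_flip hψn hψflip
      (a := ell x h) (b := lam • v x + lam⁻¹ • v h) hcomp
    refine le_trans hmono ?_
    exact hψn.comb_le (le_of_lt hlam) (by positivity) _ _
  -- quadratic growth constant
  obtain ⟨C, hC0, hC⟩ : ∃ C : ℝ, 0 ≤ C ∧
      ∀ z : PiLp 2 (fun i => EuclideanSpace ℝ (Fin (n i))), ψ (v z) ≤ C * ‖z‖^2 := by
    obtain ⟨A, hA0, hA⟩ := isNorm_le_const hψn
    choose B hB0 hB using fun i => isNorm_le_const (hMin i)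
    refine ⟨A * ∑ i, (B i)^2, mul_nonneg hA0 (Finset.sum_nonneg fun i _ => sq_nonneg _), fun z => ?_⟩
    have h1 : ψ (v z) ≤ A * ‖v z‖ := hA _
    have h2 : ‖v z‖ ≤ ∑ i, |v z i| := euclid_norm_le_sum _
    have h3 : ∀ i, |v z i| ≤ (B i)^2 * ‖z‖^2 := by
      intro i
      have h4 : v z i = Mi i (z i)^2 := rfl
      have h5 := hB i (z i)
      have h6 : Mi i (z i)^2 ≤ (B i * ‖z i‖)^2 :=
        pow_le_pow_left₀ ((hMin i).1 _) h5 2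
      have h7 : ‖z i‖ ≤ ‖z‖ := piLp_apply_norm_le z i
      have h8 : (B i * ‖z i‖)^2 ≤ (B i)^2 * ‖z‖^2 := by
        have h9 : (B i * ‖z i‖)^2 ≤ (B i * ‖z‖)^2 :=
          pow_le_pow_left₀ (mul_nonneg (hB0 i) (norm_nonneg _)) (mul_le_mul_of_nonneg_left h7 (hB0 i)) 2
        have h10 : (B i * ‖z‖)^2 = (B i)^2 * ‖z‖^2 := by ring
        linarith [h10 ▸ h9]
      rw [h4, abs_of_nonneg (sq_nonneg _)]
      linarith
    calc ψ (v z) ≤ A * ‖v z‖ := h1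
      _ ≤ A * ∑ i, |v z i| := mul_le_mul_of_nonneg_left h2 hA0
      _ ≤ A * ∑ i, (B i)^2 * ‖z‖^2 :=
          mul_le_mul_of_nonneg_left (Finset.sum_le_sum fun i _ => h3 i) hA0
      _ = (A * ∑ i, (B i)^2) * ‖z‖^2 := by rw [← Finset.sum_mul]; ring
  -- derivative of v
  have hΦiC : ∀ i, ContDiff ℝ 1 (fun z => Mi i z ^ 2) := fun i => (hMi i).2.1
  set P : (i : Fin K) → PiLp 2 (fun i => EuclideanSpace ℝ (Fin (n i))) →L[ℝ]
      EuclideanSpace ℝ (Fin (n i)) :=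
    fun i => (ContinuousLinearMap.proj i).comp
      (PiLp.continuousLinearEquiv 2 ℝ
        (fun i => EuclideanSpace ℝ (Fin (n i)))).toContinuousLinearMap with hP
  set L : (x : PiLp 2 (fun i => EuclideanSpace ℝ (Fin (n i)))) →
      (PiLp 2 (fun i => EuclideanSpace ℝ (Fin (n i))) →L[ℝ] EuclideanSpace ℝ (Fin K)) :=
    fun x => ((PiLp.continuousLinearEquiv 2 ℝ
        (fun _ : Fin K => ℝ)).symm.toContinuousLinearMap).comp
      (ContinuousLinearMap.pi
        (fun i => (fderiv ℝ (fun z => Mi i z ^ 2) (x i)).comp (P i))) with hL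
  have hvD : ∀ x, HasFDerivAt v (L x) x := by
    intro x
    have h1 : ∀ i, HasFDerivAt
        (fun y : PiLp 2 (fun i => EuclideanSpace ℝ (Fin (n i))) => Mi i (y i) ^ 2)
        ((fderiv ℝ (fun z => Mi i z ^ 2) (x i)).comp (P i)) x := by
      intro i
      have hd : HasFDerivAt (fun z => Mi i z ^ 2)
          (fderiv ℝ (fun z => Mi i z ^ 2) (x i)) (x i) :=
        (((hΦiC i).differentiable one_ne_zero) _).hasFDerivAt
      have hp : HasFDerivAt
          (fun y : PiLp 2 (fun i => EuclideanSpace ℝ (Fin (n i))) => y i) (P i) x :=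
        (P i).hasFDerivAt
      exact hd.comp x hp
    have h2 : HasFDerivAt
        (fun y : PiLp 2 (fun i => EuclideanSpace ℝ (Fin (n i))) =>
          (fun i => Mi i (y i) ^ 2 : ∀ _ : Fin K, ℝ))
        (ContinuousLinearMap.pi
          (fun i => (fderiv ℝ (fun z => Mi i z ^ 2) (x i)).comp (P i))) x := by
      apply hasFDerivAt_pi'.mpr
      intro i
      rw [ContinuousLinearMap.proj_pi]
      exact h1 i
    have h3 := ((PiLp.continuousLinearEquiv 2 ℝ
        (fun _ : Fin K => ℝ)).symm.toContinuousLinearMap).hasFDerivAt.comp x h2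
    exact h3
  have hLapp : ∀ x h, L x h = ell x h := by
    intro x h
    rfl
  -- dual bound for ψ
  have hψdual : ∀ (u y : EuclideanSpace ℝ (Fin K)),
      |fderiv ℝ (fun z => ψ z ^ 2) u y| ≤ 2 * ψ u * ψ y := fun u y =>
    smooth_fderiv_bound hκb hψ u y
  -- Φ = M², in sqrt ∘ Ψ ∘ v form
  set Φ : PiLp 2 (fun i => EuclideanSpace ℝ (Fin (n i))) → ℝ :=
    fun x => Real.sqrt (ψ (v x) ^ 2) with hΦ
  have hΦval : ∀ x, Φ x = ψ (v x) := fun x => Real.sqrt_sq (hψ0 _)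
  have hMΦ : (fun x => M x ^ 2) = Φ := by
    funext x
    rw [hMsq x, (hΦval x).symm]
  -- derivative of Φ away from 0
  set DΦ : (x : PiLp 2 (fun i => EuclideanSpace ℝ (Fin (n i)))) →
      (PiLp 2 (fun i => EuclideanSpace ℝ (Fin (n i))) →L[ℝ] ℝ) :=
    fun x => (1 / (2 * Real.sqrt (ψ (v x) ^ 2))) •
      ((fderiv ℝ (fun u => ψ u ^ 2) (v x)).comp (L x)) with hDΦ
  have hΦD : ∀ x, x ≠ 0 → HasFDerivAt Φ (DΦ x) x := by
    intro x hx
    have h1 : HasFDerivAt (fun y => ψ (v y) ^ 2)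
        ((fderiv ℝ (fun u => ψ u ^ 2) (v x)).comp (L x)) x := by
      have hd : HasFDerivAt (fun u => ψ u ^ 2)
          (fderiv ℝ (fun u => ψ u ^ 2) (v x)) (v x) :=
        (((hψ.2.1).differentiable one_ne_zero) _).hasFDerivAt
      exact hd.comp x (hvD x)
    exact h1.sqrt (ne_of_gt (pow_pos (hVpos x hx) 2))
  -- value of DΦ
  have hDΦval : ∀ x h, x ≠ 0 → DΦ x h =
      (2 * ψ (v x))⁻¹ * (fderiv ℝ (fun u => ψ u ^ 2) (v x) (ell x h)) := by
    intro x h hx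
    show (1 / (2 * Real.sqrt (ψ (v x) ^ 2))) *
        ((fderiv ℝ (fun u => ψ u ^ 2) (v x)) (L x h)) = _
    rw [hLapp, Real.sqrt_sq (hψ0 _), one_div]
  -- operator norm bound of DΦ
  have hDΦb : ∀ x, x ≠ 0 → ∀ h, |DΦ x h| ≤ (2 * C) * ‖x‖ * ‖h‖ := by
    intro x hx h
    by_cases hh : h = 0
    · rw [hh]
      simp
    have hx0 : 0 < ‖x‖ := norm_pos_iff.mpr hx
    have hh0 : 0 < ‖h‖ := norm_pos_iff.mpr hh
    have hV := hVpos x hx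
    rw [hDΦval x h hx]
    have h1 := hψdual (v x) (ell x h)
    have h2 := hellbound x h (‖h‖ / ‖x‖) (div_pos hh0 hx0)
    have h3 : ψ (v x) ≤ C * ‖x‖^2 := hC x
    have h4 : ψ (v h) ≤ C * ‖h‖^2 := hC h
    have h5 : ψ (ell x h) ≤ 2 * C * ‖x‖ * ‖h‖ := by
      have h6 : (‖h‖ / ‖x‖) * ψ (v x) ≤ (‖h‖ / ‖x‖) * (C * ‖x‖^2) :=
        mul_le_mul_of_nonneg_left h3 (by positivity)
      have h7 : (‖h‖ / ‖x‖)⁻¹ * ψ (v h) ≤ (‖h‖ / ‖x‖)⁻¹ * (C * ‖h‖^2) :=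
        mul_le_mul_of_nonneg_left h4 (by positivity)
      have h8 : (‖h‖ / ‖x‖) * (C * ‖x‖^2) = C * ‖x‖ * ‖h‖ := by
        field_simp [hx0.ne']
      have h9 : (‖h‖ / ‖x‖)⁻¹ * (C * ‖h‖^2) = C * ‖x‖ * ‖h‖ := by
        rw [inv_div]
        field_simp [hh0.ne']
      rw [h8] at h6
      rw [h9] at h7
      calc ψ (ell x h) ≤ (‖h‖ / ‖x‖) * ψ (v x) + (‖h‖ / ‖x‖)⁻¹ * ψ (v h) := h2
        _ ≤ C * ‖x‖ * ‖h‖ + C * ‖x‖ * ‖h‖ := by linarith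
        _ = 2 * C * ‖x‖ * ‖h‖ := by ring
    have h10 : |(2 * ψ (v x))⁻¹ * (fderiv ℝ (fun u => ψ u ^ 2) (v x) (ell x h))| ≤
        (2 * ψ (v x))⁻¹ * (2 * ψ (v x) * ψ (ell x h)) := by
      rw [abs_mul, abs_of_nonneg (by positivity : (0:ℝ) ≤ (2 * ψ (v x))⁻¹)]
      exact mul_le_mul_of_nonneg_left h1 (by positivity)
    have h11 : (2 * ψ (v x))⁻¹ * (2 * ψ (v x) * ψ (ell x h)) = ψ (ell x h) := by
      have hVx := hVpos x hx
      field_simp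
    calc |(2 * ψ (v x))⁻¹ * (fderiv ℝ (fun u => ψ u ^ 2) (v x) (ell x h))|
        ≤ ψ (ell x h) := by rw [← h11]; exact h10
      _ ≤ 2 * C * ‖x‖ * ‖h‖ := h5
      _ = (2 * C) * ‖x‖ * ‖h‖ := by ring
  -- derivative of Φ at 0
  have hΦD0 : HasFDerivAt Φ (0 : PiLp 2 (fun i => EuclideanSpace ℝ (Fin (n i))) →L[ℝ] ℝ) 0 := by
    rw [hasFDerivAt_iff_isLittleO_nhds_zero]
    have hΦ0 : Φ 0 = 0 := by
      rw [hΦval, hv0, hψn.zero']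
    rw [Asymptotics.isLittleO_iff]
    intro c hc
    rw [Metric.eventually_nhds_iff]
    refine ⟨c / (C + 1), by positivity, fun {y} hy => ?_⟩
    rw [dist_zero_right] at hy
    have h1 : Φ (0 + y) - Φ 0 - (0 : PiLp 2 (fun i => EuclideanSpace ℝ (Fin (n i))) →L[ℝ] ℝ) y
        = Φ y := by
      rw [hΦ0, zero_add]
      simp
    rw [h1]
    have h2 : Φ y ≤ C * ‖y‖^2 := by rw [hΦval]; exact hC y
    have h3 : 0 ≤ Φ y := by rw [hΦval]; exact hψ0 _
    rw [Real.norm_eq_abs, abs_of_nonneg h3]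
    have h4 : C * ‖y‖^2 ≤ c * ‖y‖ := by
      have h5 : C * ‖y‖ ≤ C * (c / (C+1)) := mul_le_mul_of_nonneg_left hy.le hC0
      have h6 : C * (c / (C+1)) ≤ c := by
        rw [mul_div_assoc'] at *
        rw [div_le_iff₀ (by positivity : (0:ℝ) < C + 1)]
        nlinarith
      nlinarith [norm_nonneg y]
    linarith
  -- differentiability everywhere
  have hΦdiff : Differentiable ℝ Φ := by
    intro x
    by_cases hx : x = 0
    · rw [hx]; exact hΦD0.differentiableAt
    · exact (hΦD x hx).differentiableAt
  have hfderiv0 : fderiv ℝ Φ 0 = 0 := hΦD0.fderiv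
  have hfderivx : ∀ x, x ≠ 0 → fderiv ℝ Φ x = DΦ x := fun x hx => (hΦD x hx).fderiv
  -- continuity of the derivative
  have hΦC1 : ContDiff ℝ 1 Φ := by
    rw [contDiff_one_iff_fderiv]
    refine ⟨hΦdiff, ?_⟩
    rw [continuous_iff_continuousAt]
    intro x
    by_cases hx : x = 0
    · subst hx
      have hb : ∀ y, ‖fderiv ℝ Φ y‖ ≤ (2*C) * ‖y‖ := by
        intro y
        by_cases hy : y = 0
        · rw [hy, hfderiv0]
          simp
        · rw [hfderivx y hy]
          apply ContinuousLinearMap.opNorm_le_bound _ (by positivity)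
          intro h
          have := hDΦb y hy h
          rw [Real.norm_eq_abs]
          calc |DΦ y h| ≤ (2*C) * ‖y‖ * ‖h‖ := this
            _ = (2*C) * ‖y‖ * ‖h‖ := rfl
      have htend : Filter.Tendsto (fderiv ℝ Φ) (nhds 0) (nhds 0) := by
        apply squeeze_zero_norm hb
        have : Filter.Tendsto (fun y : PiLp 2 (fun i => EuclideanSpace ℝ (Fin (n i))) =>
            (2*C) * ‖y‖) (nhds 0) (nhds ((2*C) * ‖(0 : PiLp 2 (fun i => EuclideanSpace ℝ (Fin (n i))))‖)) := by
          exact (continuous_const.mul continuous_norm).tendsto 0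
        simpa using this
      unfold ContinuousAt
      rw [hfderiv0]
      exact htend
    · -- away from zero: C¹ by composition
      have hopen : IsOpen {y : PiLp 2 (fun i => EuclideanSpace ℝ (Fin (n i))) | y ≠ 0} :=
        isOpen_compl_singleton
      have hcd : ContDiffOn ℝ 1 Φ {y : PiLp 2 (fun i => EuclideanSpace ℝ (Fin (n i))) | y ≠ 0} := by
        intro y hy
        apply ContDiffAt.contDiffWithinAt
        have hG : ContDiffAt ℝ 1 (fun y => ψ (v y) ^ 2) y := by
          have hvC : ContDiff ℝ 1 v := by
            rw [hv]
            apply (contDiff_piLp _).mpr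
            intro i
            have : (fun x : PiLp 2 (fun i => EuclideanSpace ℝ (Fin (n i))) =>
                Mi i (x i) ^ 2) = (fun z => Mi i z ^ 2) ∘ (P i) := rfl
            rw [this]
            exact (hΦiC i).comp (P i).contDiff
          exact ((hψ.2.1).comp hvC).contDiffAt
        exact hG.sqrt (ne_of_gt (pow_pos (hVpos y hy) 2))
      have hcont := hcd.continuousOn_fderiv_of_isOpen hopen le_rfl
      exact hcont.continuousAt (hopen.mem_nhds hx)
  clear_value M P L Φ DΦ
  -- smoothness inequality
  have hineq : ∀ x h, M (x + h) ^ 2 ≤ M x ^ 2 +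
      ⟪gradient (fun z => M z ^ 2) x, h⟫ + (2*κb + κ') * M h ^ 2 := by
    intro x h
    rw [gradient_inner_eq, hMΦ, hMsq, hMsq, hMsq]
    by_cases hx : x = 0
    · subst hx
      rw [hfderiv0]
      have h1 : ψ (v (0 + h)) = ψ (v h) := by rw [zero_add]
      rw [h1, hv0, hψn.zero']
      have h2 : 0 ≤ ψ (v h) := hψ0 _
      have h3 : (1:ℝ) ≤ 2*κb + κ' := by linarith
      simp only [ContinuousLinearMap.zero_apply]
      have h4 : ψ (v h) ≤ (2*κb + κ') * ψ (v h) := le_mul_of_one_le_left h2 h3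
      linarith only [h4]
    by_cases hh : h = 0
    · subst hh
      rw [add_zero, hv0, hψn.zero']
      have h2 : (fderiv ℝ Φ x) 0 = 0 := by simp
      rw [h2]
      linarith only []
    -- main case
    rw [hfderivx x hx, hDΦval x h hx]
    have hV := hVpos x hx
    have hs := hVpos h hh
    set V := ψ (v x) with hVdef
    set s := ψ (v h) with hsdef
    set D := fderiv ℝ (fun u => ψ u ^ 2) (v x) (ell x h) with hD
    -- step 1: componentwise bound + monotonicity
    have hstep1 : ψ (v (x + h)) ≤ ψ (v x + ell x h + κ' • v h) := by
      apply norm_mono_of_flip hψn hψflip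
      intro i
      have h1 : (x + h) i = x i + h i := rfl
      have h2 := smooth_key (hMi i) (x i) (h i)
      have h3 : (v x + ell x h + κ' • v h) i =
          Mi i (x i)^2 + fderiv ℝ (fun z => Mi i z ^ 2) (x i) (h i) + κ' * Mi i (h i)^2 := rfl
      have h4 : |v (x+h) i| = Mi i ((x+h) i)^2 := abs_of_nonneg (sq_nonneg _)
      rw [h4, h3, h1]
      exact h2
    -- step 2: triangle
    have hstep2 : ψ (v x + ell x h + κ' • v h) ≤ ψ (v x + ell x h) + κ' * s := by
      refine le_trans (hψn.2.2.2 _ _) ?_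
      rw [hψn.2.2.1 κ' (v h), abs_of_nonneg (by linarith : (0:ℝ) ≤ κ')]
    -- step 3: smoothness of ψ at v x with increment ℓ
    have hstep3 : ψ (v x + ell x h) ^ 2 ≤ V^2 + D + κb * ψ (ell x h)^2 := by
      have := smooth_key hψ (v x) (ell x h)
      rwa [← hVdef, ← hD] at this
    -- ψ(ℓ) ≤ 2√(Vs)
    have hells : ψ (ell x h) ≤ 2 * Real.sqrt V * Real.sqrt s := by
      have hlam0 : 0 < Real.sqrt s / Real.sqrt V :=
        div_pos (Real.sqrt_pos.mpr hs) (Real.sqrt_pos.mpr hV)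
      have h1 := hellbound x h _ hlam0
      have h2 := lam_opt' (Real.sqrt_pos.mpr hV) (Real.sqrt_pos.mpr hs)
      rw [Real.sq_sqrt hV.le, Real.sq_sqrt hs.le] at h2
      rw [← h2]
      exact h1
    have hDb : |D| ≤ 2 * V * ψ (ell x h) := hψdual (v x) (ell x h)
    have hfin : ψ (v x + ell x h) ≤ V + (2*V)⁻¹ * D + 2 * κb * s :=
      agg_arith hV hs hκb (hψ0 _) (hψ0 _) hells hDb hstep3
    have hring : (2*κb + κ') * s = 2*κb*s + κ'*s := by ring
    calc ψ (v (x+h)) ≤ ψ (v x + ell x h) + κ' * s := le_trans hstep1 hstep2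
      _ ≤ V + (2*V)⁻¹ * D + 2 * κb * s + κ' * s := by linarith only [hfin]
      _ = V + (2 * V)⁻¹ * D + (2*κb + κ') * s := by rw [hring]; ring
  exact ⟨hMnorm, by rw [hMΦ]; exact hΦC1, hineq⟩

end Aggregate

/-- aggregation of `(κ',ς')`-regular norms by a
`(κ̄,ς̄)`-regular absolute norm `θ` via `θ(‖x₁‖₁²,…,‖x_K‖_K²)^{1/2}` is
`(2κ̄+κ', ς'·√ς̄)`-regular. -/
theorem stmt_11 {K : ℕ} (n : Fin K → ℕ)
    (θ : EuclideanSpace ℝ (Fin K) → ℝ) (hθ : IsNorm θ)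
    (hθabs : ∀ t : EuclideanSpace ℝ (Fin K), θ t = θ (WithLp.toLp 2 (fun i => |t i|)))
    (κb ςb κ' ς' : ℝ) (hκb : 1 ≤ κb) (hςb : 1 ≤ ςb) (hκ' : 1 ≤ κ') (hς' : 1 ≤ ς')
    (hθreg : IsRegularNorm κb ςb θ)
    (Ni : ∀ i, EuclideanSpace ℝ (Fin (n i)) → ℝ) (hNi : ∀ i, IsNorm (Ni i))
    (hNireg : ∀ i, IsRegularNorm κ' ς' (Ni i))
    (Nagg : PiLp 2 (fun i => EuclideanSpace ℝ (Fin (n i))) → ℝ)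
    (hNagg : ∀ x, Nagg x =
      Real.sqrt (θ (WithLp.toLp 2 (fun i => Ni i (x i) ^ 2)))) :
    IsRegularNorm (2 * κb + κ') (ς' * Real.sqrt ςb) Nagg := by
  classical
  obtain ⟨θb, hθb, hθw⟩ := hθreg
  choose Mi hMis hMiw using hNireg
  obtain ⟨ψ, hψs, hψflip, hψw⟩ := symmetrize θ hθabs κb ςb hκb hςb θb hθb hθw
  have hagg := aggregate_smooth ψ κb κ' hκb hκ' hψs hψflip Mi hMis
  set M : PiLp 2 (fun i => EuclideanSpace ℝ (Fin (n i))) → ℝ :=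
    fun x => Real.sqrt (ψ (WithLp.toLp 2 (fun i => Mi i (x i) ^ 2))) with hM
  have hς'0 : (0:ℝ) < ς' := by linarith
  have hςb0 : (0:ℝ) < ςb := by linarith
  have hς : (0:ℝ) < ς' * Real.sqrt ςb := mul_pos hς'0 (Real.sqrt_pos.mpr hςb0)
  -- flip invariance of θ
  have hθflip : ∀ (t : EuclideanSpace ℝ (Fin K)) (i),
      θ (WithLp.toLp 2 (Function.update t i (-(t i)))) = θ t := by
    intro t i
    rw [hθabs (WithLp.toLp 2 (Function.update t i (-(t i)))), hθabs t]
    congr 1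
    ext j
    by_cases hj : j = i
    · subst hj
      simp
    · simp [Function.update_of_ne hj]
  have hNnn : ∀ i y, 0 ≤ Ni i y := fun i => (hNi i).1
  have hMnn : ∀ i y, 0 ≤ Mi i y := fun i => (hMis i).1.1
  have hψ0 : ∀ u, 0 ≤ ψ u := hψs.1.1
  have hθ0 : ∀ u, 0 ≤ θ u := hθ.1
  refine ⟨M, hagg, fun x => ?_⟩
  set vN : EuclideanSpace ℝ (Fin K) := WithLp.toLp 2 (fun i => Ni i (x i) ^ 2) with hvN
  set vM : EuclideanSpace ℝ (Fin K) := WithLp.toLp 2 (fun i => Mi i (x i) ^ 2) with hvM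
  have hNx : Nagg x = Real.sqrt (θ vN) := hNagg x
  have hMx : M x = Real.sqrt (ψ vM) := rfl
  have hsqsplit : Real.sqrt (ς'^2 * (ςb * θ vN)) =
      ς' * Real.sqrt ςb * Real.sqrt (θ vN) := by
    rw [Real.sqrt_mul (sq_nonneg ς'), Real.sqrt_sq (le_of_lt hς'0),
      Real.sqrt_mul (le_of_lt hςb0)]
    ring
  have hsqsplit' : Real.sqrt (ς'^2 * (ςb * ψ vM)) =
      ς' * Real.sqrt ςb * Real.sqrt (ψ vM) := by
    rw [Real.sqrt_mul (sq_nonneg ς'), Real.sqrt_sq (le_of_lt hς'0),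
      Real.sqrt_mul (le_of_lt hςb0)]
    ring
  constructor
  · -- lower bound: ς⁻¹ M ≤ Nagg
    rw [inv_mul_le_iff₀ hς, hNx, hMx]
    have h1 : θ vM ≤ θ ((ς'^2) • vN) := by
      apply norm_mono_of_flip hθ hθflip
      intro i
      have h2 : (((ς'^2) • vN) : EuclideanSpace ℝ (Fin K)) i = ς'^2 * Ni i (x i)^2 := rfl
      have h3 : |vM i| = Mi i (x i)^2 := abs_of_nonneg (sq_nonneg _)
      have h4 := (hMiw i (x i)).1
      have h5 : Mi i (x i) ≤ ς' * Ni i (x i) := by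
        have h6 := mul_le_mul_of_nonneg_left h4 (le_of_lt hς'0)
        rwa [← mul_assoc, mul_inv_cancel₀ (ne_of_gt hς'0), one_mul] at h6
      rw [h2, h3]
      nlinarith [hMnn i (x i), hNnn i (x i)]
    have h7 : θ ((ς'^2) • vN) = ς'^2 * θ vN := by
      rw [hθ.2.2.1, abs_of_nonneg (sq_nonneg _)]
    have h8 : ψ vM ≤ ςb * θ vM := (hψw vM).1
    have h9 : ψ vM ≤ ς'^2 * (ςb * θ vN) := by
      have h10 : θ vM ≤ ς'^2 * θ vN := by rw [← h7]; exact h1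
      nlinarith [hθ0 vM, hθ0 vN, sq_nonneg ς']
    calc Real.sqrt (ψ vM) ≤ Real.sqrt (ς'^2 * (ςb * θ vN)) := Real.sqrt_le_sqrt h9
      _ = ς' * Real.sqrt ςb * Real.sqrt (θ vN) := hsqsplit
  · -- upper bound: Nagg ≤ ς M
    rw [hNx, hMx]
    have h1 : θ vN ≤ θ ((ς'^2) • vM) := by
      apply norm_mono_of_flip hθ hθflip
      intro i
      have h2 : (((ς'^2) • vM) : EuclideanSpace ℝ (Fin K)) i = ς'^2 * Mi i (x i)^2 := rfl
      have h3 : |vN i| = Ni i (x i)^2 := abs_of_nonneg (sq_nonneg _)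
      have h5 := (hMiw i (x i)).2
      rw [h2, h3]
      nlinarith [hMnn i (x i), hNnn i (x i)]
    have h7 : θ ((ς'^2) • vM) = ς'^2 * θ vM := by
      rw [hθ.2.2.1, abs_of_nonneg (sq_nonneg _)]
    have h8 : θ vM ≤ ςb * ψ vM := (hψw vM).2
    have h9 : θ vN ≤ ς'^2 * (ςb * ψ vM) := by
      have h10 : θ vN ≤ ς'^2 * θ vM := by rw [← h7]; exact h1
      nlinarith [hθ0 vM, hψ0 vM, sq_nonneg ς']
    calc Real.sqrt (θ vN) ≤ Real.sqrt (ς'^2 * (ςb * ψ vM)) := Real.sqrt_le_sqrt h9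
      _ = ς' * Real.sqrt ςb * Real.sqrt (ψ vM) := hsqsplit'
end

section
/- Let F be the square of an absolute norm on ℝ^K, monotone on ℝ^K₊, and let φᵢ be squares of norms on ℝ^{nᵢ}. Then f(x) = F(φ₁(x₁),…,φ_K(x_K))^{1/2} is the square of a norm on ℝ^{n₁+…+n_K}; i.e., f(x)^{1/2} = F(φ(x))^{1/4} is a norm. -/
open scoped RealInnerProductSpace
open Real Matrix

/-- single-coordinate relaxation step for an absolute norm -/
lemma abs_norm_update {K : ℕ} (No : EuclideanSpace ℝ (Fin K) → ℝ) (hNo : IsNorm No)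
    (hNoabs : ∀ t : EuclideanSpace ℝ (Fin K), No t = No (WithLp.toLp 2 (fun i => |t i|)))
    (v : EuclideanSpace ℝ (Fin K)) (i : Fin K) (c : ℝ) (hc : |c| ≤ v i) :
    No (WithLp.toLp 2 (Function.update v.ofLp i c)) ≤ No v := by
  have hvi : (0:ℝ) ≤ v i := le_trans (abs_nonneg c) hc
  rcases eq_or_lt_of_le hvi with h0 | hpos
  · have hc0 : c = 0 := by
      have := hc; rw [← h0] at this
      exact abs_eq_zero.mp (le_antisymm this (abs_nonneg c))
    have : WithLp.toLp 2 (Function.update v.ofLp i c) = v := by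
      ext j
      by_cases hj : j = i
      · subst hj; simp [Function.update, hc0, ← h0]
      · simp [Function.update, hj]
    rw [this]
  · set θ : ℝ := (c + v i) / (2 * v i) with hθ
    have hθ0 : 0 ≤ θ := by
      apply div_nonneg _ (by linarith)
      have := neg_abs_le c; linarith
    have hθ1 : θ ≤ 1 := by
      rw [div_le_one (by linarith)]
      have := le_abs_self c; linarith
    set v' : EuclideanSpace ℝ (Fin K) := WithLp.toLp 2 (Function.update v.ofLp i (-(v i))) with hv'
    have hkey : WithLp.toLp 2 (Function.update v.ofLp i c) = θ • v + (1 - θ) • v' := by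
      ext j
      have : (θ • v + (1 - θ) • v') j = θ * v j + (1 - θ) * v' j := rfl
      rw [this]
      by_cases hj : j = i
      · subst hj
        simp only [PiLp.toLp_apply, Function.update_self, hv']
        have hx : θ * (2 * v j) = c + v j := by
          rw [hθ]; exact div_mul_cancel₀ _ (by positivity)
        linear_combination -hx
      · simp [Function.update, hj, hv']; ring
    have hv'eq : No v' = No v := by
      rw [hNoabs v', hNoabs v]
      congr 1
      ext j
      by_cases hj : j = i
      · subst hj; simp [hv']
      · simp [hv', Function.update, hj]
    calc No (WithLp.toLp 2 (Function.update v.ofLp i c)) = No (θ • v + (1 - θ) • v') := by rw [hkey]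
      _ ≤ No (θ • v) + No ((1 - θ) • v') := hNo.2.2.2 _ _
      _ = |θ| * No v + |1 - θ| * No v' := by rw [hNo.2.2.1, hNo.2.2.1]
      _ = θ * No v + (1 - θ) * No v := by
          rw [hv'eq, abs_of_nonneg hθ0, abs_of_nonneg (by linarith : (0:ℝ) ≤ 1 - θ)]
      _ = No v := by ring

lemma abs_norm_mono {K : ℕ} (No : EuclideanSpace ℝ (Fin K) → ℝ) (hNo : IsNorm No)
    (hNoabs : ∀ t : EuclideanSpace ℝ (Fin K), No t = No (WithLp.toLp 2 (fun i => |t i|)))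
    (u v : EuclideanSpace ℝ (Fin K)) (h : ∀ i, |u i| ≤ v i) : No u ≤ No v := by
  classical
  have key : ∀ s : Finset (Fin K), ∀ u : EuclideanSpace ℝ (Fin K),
      (∀ i, |u i| ≤ v i) → (∀ i, i ∉ s → u i = v i) → No u ≤ No v := by
    intro s
    induction s using Finset.induction_on with
    | empty =>
      intro u h1 h2
      have : u = v := PiLp.ext fun i => h2 i (Finset.notMem_empty i)
      rw [this]
    | @insert a t ha ih =>
      intro u h1 h2
      set u' : EuclideanSpace ℝ (Fin K) := WithLp.toLp 2 (Function.update u.ofLp a (v a)) with hu'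
      have step1 : No u ≤ No u' := by
        have : u = WithLp.toLp 2 (Function.update u'.ofLp a (u a)) := by
          ext j
          by_cases hj : j = a
          · subst hj; simp [hu']
          · simp [hu', Function.update, hj]
        rw [this]
        apply abs_norm_update No hNo hNoabs u' a (u a)
        have : u' a = v a := by simp [hu']
        rw [this]; exact h1 a
      have step2 : No u' ≤ No v := by
        apply ih
        · intro i
          by_cases hj : i = a
          · have hva : (0:ℝ) ≤ v a := (abs_nonneg _).trans (h1 a)
            rw [hj]
            have : u' a = v a := by simp [hu']
            rw [this, abs_of_nonneg hva]
          · simpa [hu', Function.update, hj] using h1 i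
        · intro i hi
          by_cases hj : i = a
          · rw [hj]; simp [hu']
          · simpa [hu', Function.update, hj] using h2 i (by simp [hj, hi])
      exact le_trans step1 step2
  exact key Finset.univ u h (fun i hi => absurd (Finset.mem_univ i) hi)

lemma sqrt_norm_isNorm {K : ℕ} (n : Fin K → ℕ)
    (No : EuclideanSpace ℝ (Fin K) → ℝ) (hNo : IsNorm No)
    (hNoabs : ∀ t : EuclideanSpace ℝ (Fin K), No t = No (WithLp.toLp 2 (fun i => |t i|)))
    (Ni : ∀ i, EuclideanSpace ℝ (Fin (n i)) → ℝ) (hNi : ∀ i, IsNorm (Ni i)) :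
    IsNorm (fun x : PiLp 2 (fun i => EuclideanSpace ℝ (Fin (n i))) =>
      Real.sqrt (No (WithLp.toLp 2 (fun i => Ni i (x i) ^ 2)))) := by
  set G : PiLp 2 (fun i => EuclideanSpace ℝ (Fin (n i))) → ℝ :=
    fun x => No (WithLp.toLp 2 (fun i => Ni i (x i) ^ 2)) with hG
  have hGnn : ∀ x, 0 ≤ G x := fun x => hNo.1 _
  have hNinn : ∀ i z, 0 ≤ Ni i z := fun i => (hNi i).1
  refine ⟨fun x => Real.sqrt_nonneg _, ?_, ?_, ?_⟩
  · -- definiteness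
    intro x
    rw [show Real.sqrt (G x) = 0 ↔ G x = 0 from by
      rw [Real.sqrt_eq_zero (hGnn x)]]
    rw [hNo.2.1]
    constructor
    · intro h
      refine PiLp.ext fun i => ?_
      have hi : Ni i (x i) ^ 2 = 0 := by simpa using congrArg (fun v => v i) h
      have : Ni i (x i) = 0 := by
        have := sq_nonneg (Ni i (x i)); nlinarith [hi]
      exact ((hNi i).2.1 (x i)).mp this
    · intro h
      ext i
      have : x i = 0 := by simp [h]
      rw [PiLp.toLp_apply, this]
      have : Ni i 0 = 0 := ((hNi i).2.1 0).mpr rfl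
      simpa [this]
  · -- homogeneity
    intro c x
    have hvec : WithLp.toLp 2 (fun i => Ni i ((c • x) i) ^ 2) =
        (c ^ 2 • WithLp.toLp 2 fun i => Ni i (x i) ^ 2 : EuclideanSpace ℝ (Fin K)) := by
      ext i
      have h1 : (c • x) i = c • x i := rfl
      have h2 : (c ^ 2 • WithLp.toLp 2 fun i => Ni i (x i) ^ 2 : EuclideanSpace ℝ (Fin K)) i
          = c ^ 2 * Ni i (x i) ^ 2 := rfl
      rw [PiLp.toLp_apply, h1, h2, (hNi i).2.2.1, mul_pow, sq_abs]
    show Real.sqrt (No _) = _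
    rw [hvec, hNo.2.2.1, abs_of_nonneg (sq_nonneg c), Real.sqrt_mul (sq_nonneg c),
      Real.sqrt_sq_eq_abs]
  · -- triangle inequality
    intro x y
    set a : Fin K → ℝ := fun i => Ni i (x i) with ha
    set b : Fin K → ℝ := fun i => Ni i (y i) with hb
    have hcb : ∀ i, Ni i ((x + y) i) ≤ a i + b i := by
      intro i
      have : (x + y) i = x i + y i := rfl
      rw [this]
      exact (hNi i).2.2.2 _ _
    have hcnn : ∀ i, 0 ≤ Ni i ((x + y) i) := fun i => hNinn i _
    show Real.sqrt (G (x + y)) ≤ Real.sqrt (G x) + Real.sqrt (G y)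
    by_cases hA : G x = 0
    · -- a = 0
      have hz : WithLp.toLp 2 (fun i => a i ^ 2) = (0 : EuclideanSpace ℝ (Fin K)) := (hNo.2.1 _).mp hA
      have haz : ∀ i, a i = 0 := by
        intro i
        have hsq : a i ^ 2 = 0 := by simpa using congrArg (fun v => v i) hz
        nlinarith [hsq, sq_nonneg (a i)]
      have hmono : G (x + y) ≤ G y := by
        apply abs_norm_mono No hNo hNoabs
        intro i
        rw [abs_of_nonneg (sq_nonneg _)]
        have h1 : Ni i ((x + y) i) ≤ b i := by have := hcb i; rw [haz i] at this; linarith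
        exact pow_le_pow_left₀ (hcnn i) h1 2
      have := Real.sqrt_le_sqrt hmono
      have := Real.sqrt_nonneg (G x)
      linarith
    by_cases hB : G y = 0
    · have hz : WithLp.toLp 2 (fun i => b i ^ 2) = (0 : EuclideanSpace ℝ (Fin K)) := (hNo.2.1 _).mp hB
      have hbz : ∀ i, b i = 0 := by
        intro i
        have hsq : b i ^ 2 = 0 := by simpa using congrArg (fun v => v i) hz
        nlinarith [hsq, sq_nonneg (b i)]
      have hmono : G (x + y) ≤ G x := by
        apply abs_norm_mono No hNo hNoabs
        intro i
        rw [abs_of_nonneg (sq_nonneg _)]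
        have h1 : Ni i ((x + y) i) ≤ a i := by have := hcb i; rw [hbz i] at this; linarith
        exact pow_le_pow_left₀ (hcnn i) h1 2
      have := Real.sqrt_le_sqrt hmono
      have := Real.sqrt_nonneg (G y)
      linarith
    · have hA' : 0 < G x := lt_of_le_of_ne (hGnn x) (Ne.symm hA)
      have hB' : 0 < G y := lt_of_le_of_ne (hGnn y) (Ne.symm hB)
      set sA := Real.sqrt (G x) with hsA
      set sB := Real.sqrt (G y) with hsB
      have hsA' : 0 < sA := Real.sqrt_pos.mpr hA'
      have hsB' : 0 < sB := Real.sqrt_pos.mpr hB'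
      set θ : ℝ := sA / (sA + sB) with hθ
      have hθ0 : 0 < θ := div_pos hsA' (by linarith)
      have hθ1 : θ < 1 := by
        rw [hθ, div_lt_one (by linarith)]; linarith
      have h1θ : 0 < 1 - θ := by linarith
      -- pointwise bound
      have hpt : ∀ i, |Ni i ((x + y) i) ^ 2| ≤
          (θ⁻¹ • WithLp.toLp 2 (fun i => a i ^ 2) + (1 - θ)⁻¹ • WithLp.toLp 2 (fun i => b i ^ 2)
            : EuclideanSpace ℝ (Fin K)) i := by
        intro i
        have happ : (θ⁻¹ • WithLp.toLp 2 (fun i => a i ^ 2) + (1 - θ)⁻¹ • WithLp.toLp 2 (fun i => b i ^ 2)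
            : EuclideanSpace ℝ (Fin K)) i = θ⁻¹ * a i ^ 2 + (1 - θ)⁻¹ * b i ^ 2 := rfl
        rw [happ, abs_of_nonneg (sq_nonneg _)]
        have h1 : Ni i ((x + y) i) ^ 2 ≤ (a i + b i) ^ 2 :=
          pow_le_pow_left₀ (hcnn i) (hcb i) 2
        have h2 : (a i + b i) ^ 2 ≤ θ⁻¹ * a i ^ 2 + (1 - θ)⁻¹ * b i ^ 2 := by
          have hiden : θ⁻¹ * a i ^ 2 + (1 - θ)⁻¹ * b i ^ 2 - (a i + b i) ^ 2
              = ((1 - θ) * a i - θ * b i) ^ 2 / (θ * (1 - θ)) := by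
            field_simp
            ring
          nlinarith [div_nonneg (sq_nonneg ((1 - θ) * a i - θ * b i))
            (le_of_lt (mul_pos hθ0 h1θ)), hiden]
        linarith
      have hmono : G (x + y) ≤ No (θ⁻¹ • WithLp.toLp 2 (fun i => a i ^ 2)
          + (1 - θ)⁻¹ • WithLp.toLp 2 (fun i => b i ^ 2)) :=
        abs_norm_mono No hNo hNoabs _ _ hpt
      have htri : No (θ⁻¹ • WithLp.toLp 2 (fun i => a i ^ 2) + (1 - θ)⁻¹ • WithLp.toLp 2 (fun i => b i ^ 2)
            : EuclideanSpace ℝ (Fin K))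
          ≤ θ⁻¹ * G x + (1 - θ)⁻¹ * G y := by
        calc No _ ≤ No (θ⁻¹ • WithLp.toLp 2 (fun i => a i ^ 2) : EuclideanSpace ℝ (Fin K))
              + No ((1 - θ)⁻¹ • WithLp.toLp 2 (fun i => b i ^ 2) : EuclideanSpace ℝ (Fin K)) :=
            hNo.2.2.2 _ _
          _ = θ⁻¹ * G x + (1 - θ)⁻¹ * G y := by
            rw [hNo.2.2.1, hNo.2.2.1, abs_of_nonneg (inv_nonneg.mpr hθ0.le),
              abs_of_nonneg (inv_nonneg.mpr h1θ.le)]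
      have hcompute : θ⁻¹ * G x + (1 - θ)⁻¹ * G y = (sA + sB) ^ 2 := by
        have hAs : G x = sA ^ 2 := (Real.sq_sqrt (hGnn x)).symm
        have hBs : G y = sB ^ 2 := (Real.sq_sqrt (hGnn y)).symm
        rw [hAs, hBs, hθ]
        have h1 : (sA / (sA + sB))⁻¹ = (sA + sB) / sA := by
          rw [inv_div]
        have h2 : (1 - sA / (sA + sB)) = sB / (sA + sB) := by
          field_simp
          ring
        rw [h1, h2, inv_div]
        field_simp
      have hfin : G (x + y) ≤ (sA + sB) ^ 2 := by
        rw [← hcompute]; exact le_trans hmono htri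
      calc Real.sqrt (G (x + y)) ≤ Real.sqrt ((sA + sB) ^ 2) := Real.sqrt_le_sqrt hfin
        _ = sA + sB := Real.sqrt_sq (by positivity)

/-- if `F` is the square of an absolute norm and `φᵢ` are squares
of norms, then `f(x) = F(φ₁(x₁),…,φ_K(x_K))^{1/2}` is the square of a norm:
`F(φ(x))^{1/4}` is a norm. -/
theorem stmt_16 {K : ℕ} (n : Fin K → ℕ)
    (No : EuclideanSpace ℝ (Fin K) → ℝ) (hNo : IsNorm No)
    (hNoabs : ∀ t : EuclideanSpace ℝ (Fin K), No t = No (WithLp.toLp 2 (fun i => |t i|)))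
    (F : EuclideanSpace ℝ (Fin K) → ℝ) (hF : ∀ y, F y = No y ^ 2)
    (Ni : ∀ i, EuclideanSpace ℝ (Fin (n i)) → ℝ) (hNi : ∀ i, IsNorm (Ni i))
    (φ : ∀ i, EuclideanSpace ℝ (Fin (n i)) → ℝ)
    (hφ : ∀ i x, φ i x = Ni i x ^ 2)
    (f : PiLp 2 (fun i => EuclideanSpace ℝ (Fin (n i))) → ℝ)
    (hf : ∀ x, f x = (F (WithLp.toLp 2 (fun i => φ i (x i)))) ^ ((1 : ℝ) / 2)) :
    (∃ M : PiLp 2 (fun i => EuclideanSpace ℝ (Fin (n i))) → ℝ,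
      IsNorm M ∧ ∀ x, f x = M x ^ 2) ∧
    IsNorm (fun x : PiLp 2 (fun i => EuclideanSpace ℝ (Fin (n i))) =>
      (F (WithLp.toLp 2 (fun i => φ i (x i)))) ^ ((1 : ℝ) / 4)) := by
  
  set G : PiLp 2 (fun i => EuclideanSpace ℝ (Fin (n i))) → ℝ :=
    fun x => No (WithLp.toLp 2 (fun i => Ni i (x i) ^ 2)) with hG
  have hGnn : ∀ x, 0 ≤ G x := fun x => hNo.1 _
  have hFG : ∀ x, F (WithLp.toLp 2 (fun i => φ i (x i))) = G x ^ 2 := by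
    intro x
    have hv : WithLp.toLp 2 (fun i => φ i (x i)) = (WithLp.toLp 2 (fun i => Ni i (x i) ^ 2) : EuclideanSpace ℝ (Fin K)) :=
      congrArg (WithLp.toLp 2) (funext fun i => hφ i (x i))
    rw [hF, hv]
  have hM : IsNorm (fun x : PiLp 2 (fun i => EuclideanSpace ℝ (Fin (n i))) =>
      Real.sqrt (No (WithLp.toLp 2 (fun i => Ni i (x i) ^ 2)))) :=
    sqrt_norm_isNorm n No hNo hNoabs Ni hNi
  have h4 : (fun x : PiLp 2 (fun i => EuclideanSpace ℝ (Fin (n i))) =>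
      (F (WithLp.toLp 2 (fun i => φ i (x i)))) ^ ((1 : ℝ) / 4))
      = fun x => Real.sqrt (No (WithLp.toLp 2 (fun i => Ni i (x i) ^ 2))) := by
    funext x
    rw [hFG, ← Real.rpow_natCast (G x) 2, ← Real.rpow_mul (hGnn x)]
    rw [Real.sqrt_eq_rpow]
    norm_num
    rfl
  constructor
  · refine ⟨fun x => (F (WithLp.toLp 2 (fun i => φ i (x i)))) ^ ((1 : ℝ) / 4), ?_, ?_⟩
    · rw [h4]; exact hM
    · intro x
      have h4x : (F (WithLp.toLp 2 (fun i => φ i (x i)))) ^ ((1:ℝ)/4) = Real.sqrt (No (WithLp.toLp 2 (fun i => Ni i (x i) ^ 2))) :=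
        congrFun h4 x
      have hL : (F (WithLp.toLp 2 (fun i => φ i (x i)))) ^ ((1:ℝ)/2) = G x := by
        rw [hFG, ← Real.rpow_natCast (G x) 2, ← Real.rpow_mul (hGnn x)]
        norm_num
      show f x = ((F (WithLp.toLp 2 (fun i => φ i (x i)))) ^ ((1:ℝ)/4)) ^ 2
      rw [hf, h4x, Real.sq_sqrt (hGnn x), hL]
  · rw [h4]; exact hM
end
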